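/- arXiv:2309.01208 — 12 statements merged into one kernel-verified Lean document; each statement's English description precedes it below -/
import Mathlib

section
/- Let n be a positive multiple of 5 and let m ≥ n. For all strictly increasing sequences x, y ∈ {1, …, m}^n (i.e., x_1 < x_2 < ⋯ < x_n and y_1 < y_2 < ⋯ < y_n) and every set S ⊆ {1, …, n} with |S| = n/5 such that x|_S ≠ y|_S, there exists a sequence z ∈ {0, 1, …, m+1}^n such that lis(f_S(x, z)) ≠ lis(f_S(y, z)). -/
/-- `lis x` is the maximum cardinality of an increasing subsequence of the
finite sequence `x`, i.e. of a set `T` of positions such that `x` is strictly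
increasing along `T`. -/
def lis {N : ℕ} (x : Fin N → ℕ) : ℕ :=
  Finset.sup (Finset.univ.filter fun T : Finset (Fin N) =>
    ∀ i ∈ T, ∀ j ∈ T, i < j → x i < x j) Finset.card

lemma le_lis {N : ℕ} (g : Fin N → ℕ) (T : Finset (Fin N))
    (hT : ∀ i ∈ T, ∀ j ∈ T, i < j → g i < g j) : T.card ≤ lis g :=
  Finset.le_sup (by simpa using hT)

lemma lis_le_image {N : ℕ} (g : Fin N → ℕ) :
    lis g ≤ (Finset.univ.image g).card := by
  apply Finset.sup_le
  intro T hT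
  simp only [Finset.mem_filter, Finset.mem_univ, true_and] at hT
  have hinj : Set.InjOn g T := by
    intro a ha b hb hab
    rcases lt_trichotomy a b with h | h | h
    · exact absurd hab (ne_of_lt (hT a ha b hb h))
    · exact h
    · exact absurd hab.symm (ne_of_lt (hT b hb a ha h))
  calc T.card = (T.image g).card := (Finset.card_image_of_injOn hinj).symm
    _ ≤ (Finset.univ.image g).card :=
        Finset.card_le_card (Finset.image_subset_image (Finset.subset_univ T))

lemma exists_mono_embed {n : ℕ} (P : Finset (Fin n)) (V : Finset ℕ)
    (hc : P.card = V.card) (d : ℕ) :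
    ∃ z : Fin n → ℕ, (∀ q, q ∉ P → z q = d) ∧ (∀ q, q ∈ P → z q ∈ V) ∧
      ∀ q₁ ∈ P, ∀ q₂ ∈ P, q₁ < q₂ → z q₁ < z q₂ := by
  refine ⟨fun q => if h : q ∈ P then V.orderEmbOfFin rfl ((P.orderIsoOfFin hc).symm ⟨q, h⟩) else d,
    fun q hq => dif_neg hq, fun q hq => ?_, fun q₁ h₁ q₂ h₂ hlt => ?_⟩
  · simp only; rw [dif_pos hq]; exact Finset.orderEmbOfFin_mem _ _ _
  · simp only; rw [dif_pos h₁, dif_pos h₂]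
    exact (V.orderEmbOfFin rfl).strictMono
      (((P.orderIsoOfFin hc).symm.lt_iff_lt).mpr (Subtype.mk_lt_mk.mpr hlt))

lemma key {n : ℕ} (m : ℕ) (x y : Fin n → ℕ)
    (hx : StrictMono x) (hy : StrictMono y)
    (hxr : ∀ i, 1 ≤ x i ∧ x i ≤ m) (hyr : ∀ i, 1 ≤ y i ∧ y i ≤ m)
    (S : Finset (Fin n)) (hcard : 2 * S.card + 2 ≤ n)
    (i0 : Fin n) (hi0 : i0 ∈ S) (hlt : x i0 < y i0) :
    ∃ z : Fin n → ℕ, (∀ i, z i ≤ m + 1) ∧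
      lis (fun i => if i ∈ S then x i else z i) ≠
      lis (fun i => if i ∈ S then y i else z i) := by
  classical
  set k := S.card with hk
  set Slt := S.filter (fun q => q < i0) with hSlt
  set Sge := S.filter (fun q => i0 ≤ q) with hSge
  set Sgt := S.filter (fun q => i0 < q) with hSgt
  set Sle := S.filter (fun q => q ≤ i0) with hSle
  have h1 : Slt.card + Sge.card = k := by
    have := Finset.card_filter_add_card_filter_not (s := S) (p := fun q => q < i0)
    simpa [not_lt, hSlt, hSge, hk] using this
  have hSge_ins : Sge = insert i0 Sgt := by
    ext q
    simp only [hSge, hSgt, Finset.mem_filter, Finset.mem_insert]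
    constructor
    · rintro ⟨hqS, hq⟩
      rcases eq_or_lt_of_le hq with h | h
      · exact Or.inl h.symm
      · exact Or.inr ⟨hqS, h⟩
    · rintro (rfl | ⟨hqS, hq⟩)
      · exact ⟨hi0, le_refl _⟩
      · exact ⟨hqS, le_of_lt hq⟩
  have hSle_ins : Sle = insert i0 Slt := by
    ext q
    simp only [hSle, hSlt, Finset.mem_filter, Finset.mem_insert]
    constructor
    · rintro ⟨hqS, hq⟩
      rcases eq_or_lt_of_le hq with h | h
      · exact Or.inl h
      · exact Or.inr ⟨hqS, h⟩
    · rintro (rfl | ⟨hqS, hq⟩)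
      · exact ⟨hi0, le_refl _⟩
      · exact ⟨hqS, le_of_lt hq⟩
  have hSgecard : Sge.card = Sgt.card + 1 := by
    rw [hSge_ins, Finset.card_insert_of_notMem (by simp [hSgt])]
  have hSlecard : Sle.card = Slt.card + 1 := by
    rw [hSle_ins, Finset.card_insert_of_notMem (by simp [hSlt])]
  have hinterLt : Finset.Iio i0 ∩ S = Slt := by
    ext q; simp [hSlt, Finset.mem_Iio, and_comm]
  have hinterGt : Finset.Ioi i0 ∩ S = Sgt := by
    ext q; simp [hSgt, Finset.mem_Ioi, and_comm]
  by_cases hpos : 2 * Slt.card + 2 ≤ (i0 : ℕ)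
  · -- Case L : enough room before i0
    set PL := Finset.Iio i0 \ S with hPLdef
    have hPL : PL.card + Slt.card = (i0 : ℕ) := by
      rw [hPLdef, ← hinterLt]
      rw [Finset.card_sdiff_add_card_inter]
      exact Fin.card_Iio i0
    obtain ⟨P', hP'sub, hP'card⟩ := Finset.exists_subset_card_eq (s := PL) (n := Slt.card + 2) (by omega)
    set V := insert 0 (Sle.image x) with hV
    have hVcard : V.card = Slt.card + 2 := by
      rw [hV, Finset.card_insert_of_notMem, Finset.card_image_of_injective _ hx.injective,
        hSlecard]
      intro h0
      obtain ⟨j, _, hj0⟩ := Finset.mem_image.mp h0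
      have := (hxr j).1; omega
    obtain ⟨z, hzd, hzV, hzmono⟩ := exists_mono_embed P' V (hP'card.trans hVcard.symm) 0
    have hP'notS : ∀ q ∈ P', q ∉ S := fun q hq => (Finset.mem_sdiff.mp (hP'sub hq)).2
    have hP'lt : ∀ q ∈ P', q < i0 := fun q hq =>
      Finset.mem_Iio.mp (Finset.mem_sdiff.mp (hP'sub hq)).1
    have hzle : ∀ i, z i ≤ m + 1 := by
      intro i
      by_cases h : i ∈ P'
      · have hmem := hzV i h
        rw [hV] at hmem
        rcases Finset.mem_insert.mp hmem with h0 | h1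
        · omega
        · obtain ⟨j, _, hje⟩ := Finset.mem_image.mp h1
          rw [← hje]; exact le_trans (hxr j).2 (Nat.le_succ m)
      · rw [hzd i h]; omega
    have hzlty : ∀ q ∈ P', z q < y i0 := by
      intro q hq
      have hmem := hzV q hq
      rw [hV] at hmem
      rcases Finset.mem_insert.mp hmem with h0 | h1
      · have := (hyr i0).1; omega
      · obtain ⟨j, hj, hje⟩ := Finset.mem_image.mp h1
        rw [← hje]; exact lt_of_le_of_lt (hx.monotone (Finset.mem_filter.mp hj).2) hlt
    refine ⟨z, hzle, ?_⟩
    have hlow : k + 2 ≤ lis (fun i => if i ∈ S then y i else z i) := by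
      have hdisj : Disjoint P' Sge := by
        rw [Finset.disjoint_left]
        intro q hq hq2
        exact absurd (Finset.mem_filter.mp hq2).2 (not_le.mpr (hP'lt q hq))
      have hcardT : (P' ∪ Sge).card = k + 2 := by
        rw [Finset.card_union_of_disjoint hdisj, hP'card]; omega
      rw [← hcardT]
      apply le_lis
      intro i hi j hj hij
      rcases Finset.mem_union.mp hi with hiP | hiS <;>
        rcases Finset.mem_union.mp hj with hjP | hjS
      · rw [if_neg (hP'notS i hiP), if_neg (hP'notS j hjP)]
        exact hzmono i hiP j hjP hij
      · rw [if_neg (hP'notS i hiP), if_pos (Finset.mem_filter.mp hjS).1]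
        exact lt_of_lt_of_le (hzlty i hiP) (hy.monotone (Finset.mem_filter.mp hjS).2)
      · exact absurd hij
          (not_lt.mpr (le_of_lt (lt_of_lt_of_le (hP'lt j hjP) (Finset.mem_filter.mp hiS).2)))
      · rw [if_pos (Finset.mem_filter.mp hiS).1, if_pos (Finset.mem_filter.mp hjS).1]
        exact hy hij
    have hup : lis (fun i => if i ∈ S then x i else z i) ≤ k + 1 := by
      refine le_trans (lis_le_image _) (le_trans (Finset.card_le_card
        (s := Finset.univ.image fun i => if i ∈ S then x i else z i)
        (t := insert 0 (S.image x)) ?_) ?_)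
      · intro v hv
        obtain ⟨q, _, rfl⟩ := Finset.mem_image.mp hv
        by_cases hq : q ∈ S
        · simp only [if_pos hq]
          exact Finset.mem_insert_of_mem (Finset.mem_image_of_mem x hq)
        · simp only [if_neg hq]
          by_cases hq' : q ∈ P'
          · have hmem := hzV q hq'
            rw [hV] at hmem
            exact Finset.insert_subset_insert _
              (Finset.image_subset_image (Finset.filter_subset _ _)) hmem
          · rw [hzd q hq']; exact Finset.mem_insert_self 0 _
      · refine le_trans (Finset.card_insert_le _ _) ?_
        have := Finset.card_image_le (s := S) (f := x)
        omega
    omega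
  · -- Case R : enough room after i0
    push_neg at hpos
    set PR := Finset.Ioi i0 \ S with hPRdef
    have hPR : PR.card + Sgt.card = n - 1 - (i0 : ℕ) := by
      rw [hPRdef, ← hinterGt]
      rw [Finset.card_sdiff_add_card_inter]
      exact Fin.card_Ioi i0
    have hi0n : (i0 : ℕ) < n := i0.isLt
    obtain ⟨P', hP'sub, hP'card⟩ := Finset.exists_subset_card_eq (s := PR) (n := Sgt.card + 2) (by omega)
    set V := insert (m + 1) (Sge.image y) with hV
    have hVcard : V.card = Sgt.card + 2 := by
      rw [hV, Finset.card_insert_of_notMem, Finset.card_image_of_injective _ hy.injective,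
        hSgecard]
      intro h0
      obtain ⟨j, _, hj0⟩ := Finset.mem_image.mp h0
      have := (hyr j).2; omega
    obtain ⟨z, hzd, hzV, hzmono⟩ := exists_mono_embed P' V (hP'card.trans hVcard.symm) (m + 1)
    have hP'notS : ∀ q ∈ P', q ∉ S := fun q hq => (Finset.mem_sdiff.mp (hP'sub hq)).2
    have hP'gt : ∀ q ∈ P', i0 < q := fun q hq =>
      Finset.mem_Ioi.mp (Finset.mem_sdiff.mp (hP'sub hq)).1
    have hzle : ∀ i, z i ≤ m + 1 := by
      intro i
      by_cases h : i ∈ P'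
      · have hmem := hzV i h
        rw [hV] at hmem
        rcases Finset.mem_insert.mp hmem with h0 | h1
        · omega
        · obtain ⟨j, _, hje⟩ := Finset.mem_image.mp h1
          rw [← hje]; exact le_trans (hyr j).2 (Nat.le_succ m)
      · rw [hzd i h]
    have hzgtx : ∀ q ∈ P', x i0 < z q := by
      intro q hq
      have hmem := hzV q hq
      rw [hV] at hmem
      rcases Finset.mem_insert.mp hmem with h0 | h1
      · have := (hxr i0).2; omega
      · obtain ⟨j, hj, hje⟩ := Finset.mem_image.mp h1
        rw [← hje]; exact lt_of_lt_of_le hlt (hy.monotone (Finset.mem_filter.mp hj).2)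
    refine ⟨z, hzle, ?_⟩
    have hlow : k + 2 ≤ lis (fun i => if i ∈ S then x i else z i) := by
      have hdisj : Disjoint Sle P' := by
        rw [Finset.disjoint_left]
        intro q hq hq2
        exact absurd (Finset.mem_filter.mp hq).2 (not_le.mpr (hP'gt q hq2))
      have hcardT : (Sle ∪ P').card = k + 2 := by
        rw [Finset.card_union_of_disjoint hdisj, hP'card, hSlecard]; omega
      rw [← hcardT]
      apply le_lis
      intro i hi j hj hij
      rcases Finset.mem_union.mp hi with hiS | hiP <;>
        rcases Finset.mem_union.mp hj with hjS | hjP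
      · rw [if_pos (Finset.mem_filter.mp hiS).1, if_pos (Finset.mem_filter.mp hjS).1]
        exact hx hij
      · rw [if_pos (Finset.mem_filter.mp hiS).1, if_neg (hP'notS j hjP)]
        exact lt_of_le_of_lt (hx.monotone (Finset.mem_filter.mp hiS).2) (hzgtx j hjP)
      · exact absurd hij
          (not_lt.mpr (le_of_lt (lt_of_le_of_lt (Finset.mem_filter.mp hjS).2 (hP'gt i hiP))))
      · rw [if_neg (hP'notS i hiP), if_neg (hP'notS j hjP)]
        exact hzmono i hiP j hjP hij
    have hup : lis (fun i => if i ∈ S then y i else z i) ≤ k + 1 := by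
      refine le_trans (lis_le_image _) (le_trans (Finset.card_le_card
        (s := Finset.univ.image fun i => if i ∈ S then y i else z i)
        (t := insert (m + 1) (S.image y)) ?_) ?_)
      · intro v hv
        obtain ⟨q, _, rfl⟩ := Finset.mem_image.mp hv
        by_cases hq : q ∈ S
        · simp only [if_pos hq]
          exact Finset.mem_insert_of_mem (Finset.mem_image_of_mem y hq)
        · simp only [if_neg hq]
          by_cases hq' : q ∈ P'
          · have hmem := hzV q hq'
            rw [hV] at hmem
            exact Finset.insert_subset_insert _
              (Finset.image_subset_image (Finset.filter_subset _ _)) hmem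
          · rw [hzd q hq']; exact Finset.mem_insert_self (m + 1) _
      · refine le_trans (Finset.card_insert_le _ _) ?_
        have := Finset.card_image_le (s := S) (f := y)
        omega
    omega

/-- Claim 3.2: for strictly increasing `x, y ∈ {1,…,m}^n` (with `5 ∣ n`, `n ≤ m`)
and any `S ⊆ [n]` with `|S| = n/5` on which `x` and `y` differ, there is a
sequence `z ∈ {0,…,m+1}^n` with `lis (f_S(x,z)) ≠ lis (f_S(y,z))`. -/
theorem stmt0 (n m : ℕ) (hn : 0 < n) (h5 : 5 ∣ n) (hm : n ≤ m)
    (x y : Fin n → ℕ) (hx : StrictMono x) (hy : StrictMono y)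
    (hxr : ∀ i, 1 ≤ x i ∧ x i ≤ m) (hyr : ∀ i, 1 ≤ y i ∧ y i ≤ m)
    (S : Finset (Fin n)) (hS : S.card = n / 5)
    (hne : ∃ i ∈ S, x i ≠ y i) :
    ∃ z : Fin n → ℕ, (∀ i, z i ≤ m + 1) ∧
      lis (fun i => if i ∈ S then x i else z i) ≠
      lis (fun i => if i ∈ S then y i else z i) := by
  obtain ⟨i, hiS, hxy⟩ := hne
  have hn5 : 5 ≤ n := Nat.le_of_dvd hn h5
  have hdiv : 5 * (n / 5) = n := Nat.mul_div_cancel' h5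
  have hcard : 2 * S.card + 2 ≤ n := by rw [hS]; omega
  rcases lt_or_gt_of_ne hxy with h | h
  · exact key m x y hx hy hxr hyr S hcard i hiS h
  · obtain ⟨z, hz, hne'⟩ := key m y x hy hx hyr hxr S hcard i hiS h
    exact ⟨z, hz, hne'.symm⟩
end

section
/- There exists a constant c > 0 such that for every positive multiple n of 20 and every m ≥ c·n, there exists a family T of strictly increasing sequences in {1, …, m}^n with |T| ≥ 2^{n/20} such that for every set S ⊆ {1, …, n} with |S| = n/5 and all distinct x, y ∈ T, one has x|_S ≠ y|_S. -/
open Finset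

lemma choose_le_two_pow' (n k : ℕ) : n.choose k ≤ 2 ^ n := by
  rcases le_or_gt k n with h | h
  · calc n.choose k ≤ ∑ i ∈ Finset.range (n + 1), n.choose i :=
        Finset.single_le_sum (fun i _ => Nat.zero_le _) (Finset.mem_range.mpr (by omega))
      _ = 2 ^ n := Nat.sum_range_choose n
  · rw [Nat.choose_eq_zero_of_lt h]; positivity

/-- Gilbert–Varshamov type bound: a maximal "agreement ≤ a" code is large. -/
lemma gv (B a q : ℕ) (ha : a + 1 ≤ B) (hq : 0 < q) :
    ∃ C : Finset (Fin B → Fin q),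
      (∀ f ∈ C, ∀ g ∈ C, f ≠ g →
        (Finset.univ.filter fun j => f j = g j).card ≤ a) ∧
      q ^ B ≤ C.card * (2 ^ B * q ^ (B - (a + 1))) := by
  classical
  have : Fact (0 < q) := ⟨hq⟩
  set W := Fin B → Fin q
  let P : Finset W → Prop := fun C => ∀ f ∈ C, ∀ g ∈ C, f ≠ g →
      (Finset.univ.filter fun j => f j = g j).card ≤ a
  have hPdec : DecidablePred P := Classical.decPred _
  obtain ⟨C, hCmem, hmax⟩ :=
    Finset.exists_max_image ((Finset.univ : Finset (Finset W)).filter fun C => P C)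
      Finset.card ⟨∅, by simp [P]⟩
  have hC : P C := (Finset.mem_filter.mp hCmem).2
  refine ⟨C, hC, ?_⟩
  -- covering
  have cover : (Finset.univ : Finset W) ⊆
      C.biUnion (fun c => Finset.univ.filter fun z =>
        a + 1 ≤ (Finset.univ.filter fun j => z j = c j).card) := by
    intro z _
    by_cases hz : ∃ c ∈ C, a + 1 ≤ (Finset.univ.filter fun j => z j = c j).card
    · obtain ⟨c, hc, hle⟩ := hz
      exact Finset.mem_biUnion.mpr ⟨c, hc, by simp [hle]; omega⟩
    · exfalso
      push_neg at hz
      have hzC : z ∉ C := by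
        intro h
        have h2 := hz z h
        have heq : (Finset.univ.filter fun j => z j = z j) = (Finset.univ : Finset (Fin B)) := by
          simp
        rw [heq, Finset.card_univ, Fintype.card_fin] at h2
        omega
      have hP' : P (insert z C) := by
        intro f hf g hg hfg
        rcases Finset.mem_insert.mp hf with rfl | hf' <;>
          rcases Finset.mem_insert.mp hg with rfl | hg'
        · exact absurd rfl hfg
        · have := hz g hg'
          omega
        · have := hz f hf'
          have hsymm : (Finset.univ.filter fun j => f j = g j)
              = (Finset.univ.filter fun j => g j = f j) := by
            apply Finset.filter_congr; intro j _; simp [eq_comm]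
          rw [hsymm]; omega
        · exact hC f hf' g hg' hfg
      have hlt : C.card < (insert z C).card := by
        rw [Finset.card_insert_of_notMem hzC]; omega
      have := hmax (insert z C) (Finset.mem_filter.mpr ⟨Finset.mem_univ _, hP'⟩)
      omega
  -- ball bound
  have hball : ∀ c : W,
      (Finset.univ.filter fun z : W =>
        a + 1 ≤ (Finset.univ.filter fun j => z j = c j).card).card
        ≤ 2 ^ B * q ^ (B - (a + 1)) := by
    intro c
    have hsub : (Finset.univ.filter fun z : W =>
        a + 1 ≤ (Finset.univ.filter fun j => z j = c j).card) ⊆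
        (Finset.powersetCard (a + 1) (Finset.univ : Finset (Fin B))).biUnion
          (fun S => Finset.univ.filter fun z : W => ∀ j ∈ S, z j = c j) := by
      intro z hz
      simp only [Finset.mem_filter, Finset.mem_univ, true_and] at hz
      obtain ⟨S, hSsub, hScard⟩ :=
        Finset.exists_subset_card_eq (s := Finset.univ.filter fun j => z j = c j)
          (n := a + 1) hz
      refine Finset.mem_biUnion.mpr ⟨S, ?_, ?_⟩
      · exact Finset.mem_powersetCard.mpr ⟨Finset.subset_univ _, hScard⟩
      · simp only [Finset.mem_filter, Finset.mem_univ, true_and]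
        intro j hj
        have := hSsub hj
        simp only [Finset.mem_filter] at this
        exact this.2
    have hone : ∀ S ∈ Finset.powersetCard (a + 1) (Finset.univ : Finset (Fin B)),
        (Finset.univ.filter fun z : W => ∀ j ∈ S, z j = c j).card ≤ q ^ (B - (a + 1)) := by
      intro S hS
      have hScard : S.card = a + 1 := (Finset.mem_powersetCard.mp hS).2
      have key : (Finset.univ.filter fun z : W => ∀ j ∈ S, z j = c j).card ≤
          (Finset.univ : Finset ({x // x ∈ Sᶜ} → Fin q)).card := by
        apply Finset.card_le_card_of_injOn (fun z => fun i => z i.1)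
        · intro z _; exact Finset.mem_univ _
        · intro z hz z' hz' h
          simp only [Finset.coe_filter, Set.mem_setOf_eq, Finset.mem_univ, true_and]
            at hz hz'
          funext j
          by_cases hj : j ∈ S
          · rw [hz j hj, hz' j hj]
          · exact congrFun h ⟨j, Finset.mem_compl.mpr hj⟩
      rw [Finset.card_univ, Fintype.card_fun, Fintype.card_coe, Fintype.card_fin,
        Finset.card_compl, Fintype.card_fin, hScard] at key
      exact key
    calc (Finset.univ.filter fun z : W =>
        a + 1 ≤ (Finset.univ.filter fun j => z j = c j).card).card
        ≤ ((Finset.powersetCard (a + 1) (Finset.univ : Finset (Fin B))).biUnion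
          (fun S => Finset.univ.filter fun z : W => ∀ j ∈ S, z j = c j)).card :=
          Finset.card_le_card hsub
      _ ≤ ∑ S ∈ Finset.powersetCard (a + 1) (Finset.univ : Finset (Fin B)),
          (Finset.univ.filter fun z : W => ∀ j ∈ S, z j = c j).card :=
          Finset.card_biUnion_le
      _ ≤ ∑ _S ∈ Finset.powersetCard (a + 1) (Finset.univ : Finset (Fin B)),
          q ^ (B - (a + 1)) := Finset.sum_le_sum hone
      _ = B.choose (a + 1) * q ^ (B - (a + 1)) := by
          rw [Finset.sum_const, Finset.card_powersetCard, Finset.card_univ,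
            Fintype.card_fin, smul_eq_mul]
      _ ≤ 2 ^ B * q ^ (B - (a + 1)) :=
          Nat.mul_le_mul_right _ (choose_le_two_pow' B (a + 1))
  calc q ^ B = (Finset.univ : Finset W).card := by
        rw [Finset.card_univ]; simp [W, Fintype.card_fun]
    _ ≤ (C.biUnion (fun c => Finset.univ.filter fun z : W =>
          a + 1 ≤ (Finset.univ.filter fun j => z j = c j).card)).card :=
        Finset.card_le_card cover
    _ ≤ ∑ c ∈ C, (Finset.univ.filter fun z : W =>
          a + 1 ≤ (Finset.univ.filter fun j => z j = c j).card).card :=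
        Finset.card_biUnion_le
    _ ≤ ∑ _c ∈ C, 2 ^ B * q ^ (B - (a + 1)) := Finset.sum_le_sum fun c _ => hball c
    _ = C.card * (2 ^ B * q ^ (B - (a + 1))) := by
        rw [Finset.sum_const, smul_eq_mul]

def blkOf (B : ℕ) (i : Fin (20 * B)) : Fin B := ⟨(i : ℕ) / 20, by have := i.2; omega⟩

def encOf (B : ℕ) (f : Fin B → Fin 1024) (i : Fin (20 * B)) : ℕ :=
  20480 * ((i : ℕ) / 20) + 20 * (f (blkOf B i) : ℕ) + (i : ℕ) % 20 + 1

/-- Claim 3.3: there is a constant `c > 0` such that for every positive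
multiple `n` of `20` and every `m ≥ c·n`, there is a family `T` of at least
`2^(n/20)` strictly increasing sequences in `{1,…,m}^n` such that any two
distinct members of `T` differ on every index set `S` of size `n/5`. -/
theorem stmt1 : ∃ c : ℝ, 0 < c ∧ ∀ n m : ℕ, 0 < n → 20 ∣ n → c * (n : ℝ) ≤ (m : ℝ) →
    ∃ T : Finset (Fin n → ℕ),
      (∀ x ∈ T, StrictMono x ∧ ∀ i, 1 ≤ x i ∧ x i ≤ m) ∧
      2 ^ (n / 20) ≤ T.card ∧
      ∀ S : Finset (Fin n), S.card = n / 5 →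
        ∀ x ∈ T, ∀ y ∈ T, x ≠ y → ∃ i ∈ S, x i ≠ y i := by
  classical
  refine ⟨1024, by norm_num, ?_⟩
  intro n m hn h20 hm
  obtain ⟨B, rfl⟩ := h20
  have hB : 0 < B := by omega
  have hm' : 1024 * (20 * B) ≤ m := by exact_mod_cast hm
  set a : ℕ := (B - 1) / 5 with ha_def
  have ha : a + 1 ≤ B := by omega
  obtain ⟨C, hcode, hcard⟩ := gv B a 1024 ha (by norm_num)
  -- code is big
  have hCcard : 2 ^ B ≤ C.card := by
    have h10 : 2 * B ≤ 10 * (a + 1) := by omega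
    have hsplit : (1024 : ℕ) ^ B = 1024 ^ (a + 1) * 1024 ^ (B - (a + 1)) := by
      rw [← pow_add]; congr 1; omega
    have h1 : (2 : ℕ) ^ B * 2 ^ B ≤ 1024 ^ (a + 1) := by
      have e1 : (1024 : ℕ) ^ (a + 1) = 2 ^ (10 * (a + 1)) := by
        rw [pow_mul]; norm_num
      have e2 : (2 : ℕ) ^ B * 2 ^ B = 2 ^ (2 * B) := by
        rw [← pow_add]; congr 1; omega
      rw [e1, e2]
      exact Nat.pow_le_pow_right (by norm_num) h10
    have key : 2 ^ B * (2 ^ B * 1024 ^ (B - (a + 1))) ≤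
        C.card * (2 ^ B * 1024 ^ (B - (a + 1))) := by
      refine le_trans ?_ hcard
      calc 2 ^ B * (2 ^ B * 1024 ^ (B - (a + 1)))
          = (2 ^ B * 2 ^ B) * 1024 ^ (B - (a + 1)) := by ring
        _ ≤ 1024 ^ (a + 1) * 1024 ^ (B - (a + 1)) := Nat.mul_le_mul_right _ h1
        _ = 1024 ^ B := hsplit.symm
    exact Nat.le_of_mul_le_mul_right key (by positivity)
  -- encoding properties
  have enc_inj : Function.Injective (encOf B) := by
    intro f g h
    funext j
    have hjlt : 20 * (j : ℕ) < 20 * B := by have := j.2; omega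
    have h1 := congrFun h (⟨20 * (j : ℕ), hjlt⟩ : Fin (20 * B))
    have hblk : blkOf B (⟨20 * (j : ℕ), hjlt⟩ : Fin (20 * B)) = j := by
      apply Fin.ext
      simp [blkOf, Nat.mul_div_cancel_left]
    simp only [encOf, hblk] at h1
    have : (f j : ℕ) = (g j : ℕ) := by omega
    exact Fin.ext this
  refine ⟨C.image (encOf B), ?_, ?_, ?_⟩
  · rintro x hx
    obtain ⟨f, hf, rfl⟩ := Finset.mem_image.mp hx
    constructor
    · intro i i' hlt
      have hlt' : (i : ℕ) < (i' : ℕ) := hlt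
      simp only [encOf]
      have hfb : (f (blkOf B i) : ℕ) < 1024 := (f (blkOf B i)).2
      have hfb' : (f (blkOf B i') : ℕ) < 1024 := (f (blkOf B i')).2
      rcases eq_or_ne ((i : ℕ) / 20) ((i' : ℕ) / 20) with hdiv | hdiv
      · have hblk : blkOf B i = blkOf B i' := Fin.ext (by simp [blkOf, hdiv])
        rw [hblk]
        omega
      · have hdlt : (i : ℕ) / 20 < (i' : ℕ) / 20 := by
          have h3 : (i : ℕ) / 20 ≤ (i' : ℕ) / 20 :=
            Nat.div_le_div_right (le_of_lt hlt')
          omega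
        omega
    · intro i
      have hj : (i : ℕ) / 20 < B := by have := i.2; omega
      have hfb : (f (blkOf B i) : ℕ) < 1024 := (f (blkOf B i)).2
      have hmod : (i : ℕ) % 20 < 20 := Nat.mod_lt _ (by norm_num)
      simp only [encOf]
      omega
  · rw [Finset.card_image_of_injective _ enc_inj]
    have : 20 * B / 20 = B := by omega
    rw [this]
    exact hCcard
  · intro S hS x hx y hy hxy
    obtain ⟨f, hf, rfl⟩ := Finset.mem_image.mp hx
    obtain ⟨g, hg, rfl⟩ := Finset.mem_image.mp hy
    have hfg : f ≠ g := fun h => hxy (by rw [h])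
    by_contra hcon
    push_neg at hcon
    have hagree : ∀ i ∈ S, f (blkOf B i) = g (blkOf B i) := by
      intro i hi
      have h1 := hcon i hi
      simp only [encOf] at h1
      exact Fin.ext (by omega)
    set A : Finset (Fin B) := Finset.univ.filter fun j => f j = g j with hA_def
    have hAcard : A.card ≤ a := hcode f hf g hg hfg
    set A' : Finset (Fin (20 * B)) :=
      Finset.univ.filter fun i => f (blkOf B i) = g (blkOf B i) with hA'_def
    have hSA' : S ⊆ A' := fun i hi =>
      Finset.mem_filter.mpr ⟨Finset.mem_univ _, hagree i hi⟩
    have hA'sub : A' ⊆ A.biUnion fun j =>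
        Finset.univ.filter fun i : Fin (20 * B) => blkOf B i = j := by
      intro i hi
      simp only [hA'_def, Finset.mem_filter, Finset.mem_univ, true_and] at hi
      exact Finset.mem_biUnion.mpr ⟨blkOf B i,
        Finset.mem_filter.mpr ⟨Finset.mem_univ _, hi⟩,
        Finset.mem_filter.mpr ⟨Finset.mem_univ _, rfl⟩⟩
    have hfiber : ∀ j : Fin B,
        (Finset.univ.filter fun i : Fin (20 * B) => blkOf B i = j).card ≤ 20 := by
      intro j
      have : (Finset.univ.filter fun i : Fin (20 * B) => blkOf B i = j).card ≤
          (Finset.range 20).card := by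
        apply Finset.card_le_card_of_injOn (fun i : Fin (20 * B) => (i : ℕ) % 20)
        · intro i _
          exact Finset.mem_range.mpr (Nat.mod_lt _ (by norm_num))
        · intro i hi i' hi' hmod
          have hmod' : (i : ℕ) % 20 = (i' : ℕ) % 20 := hmod
          simp only [Finset.coe_filter, Set.mem_setOf_eq] at hi hi'
          have h1 : (i : ℕ) / 20 = (j : ℕ) := congrArg Fin.val hi.2
          have h2 : (i' : ℕ) / 20 = (j : ℕ) := congrArg Fin.val hi'.2
          exact Fin.ext (by omega)
      rwa [Finset.card_range] at this
    have hA'card : A'.card ≤ 20 * a := by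
      calc A'.card ≤ (A.biUnion fun j =>
            Finset.univ.filter fun i : Fin (20 * B) => blkOf B i = j).card :=
          Finset.card_le_card hA'sub
        _ ≤ ∑ j ∈ A, (Finset.univ.filter
            fun i : Fin (20 * B) => blkOf B i = j).card := Finset.card_biUnion_le
        _ ≤ ∑ _j ∈ A, 20 := Finset.sum_le_sum fun j _ => hfiber j
        _ = A.card * 20 := by rw [Finset.sum_const, smul_eq_mul]
        _ ≤ 20 * a := by omega
    have hScard : S.card = 4 * B := by rw [hS]; omega
    have := Finset.card_le_card hSA'
    omega
end

section
/- Let n be a positive multiple of 5, let m ≥ n, let z ∈ {1, …, m}^n be strictly increasing, and let S ⊆ {1, …, n} with |S| = n/5. Then the number of strictly increasing sequences x ∈ {1, …, m}^n with x|_S = z|_S is at most (n/m)^{n/5} · (5e/4)^{4n/5} · C(m, n), where e is Euler's number and C(m, n) is the binomial coefficient m choose n. -/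
private lemma list_map_eq {α β : Type*} (l : List α) (f g : α → β)
    (h : l.map f = l.map g) : ∀ a ∈ l, f a = g a := by
  induction l with
  | nil => simp
  | cons a l ih =>
    simp only [List.map_cons, List.cons.injEq] at h
    intro b hb
    rcases List.mem_cons.1 hb with rfl | hb
    · exact h.1
    · exact ih h.2 b hb

/-- If two strictly monotone functions have the same image on a finset,
they agree on the finset. -/
private lemma eq_on_of_image_eq {n : ℕ} (s : Finset (Fin n)) (x y : Fin n → ℕ)
    (hx : StrictMono x) (hy : StrictMono y) (h : s.image x = s.image y) :
    ∀ i ∈ s, x i = y i := by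
  set L := s.sort (· ≤ ·) with hL
  have hLlt : L.Pairwise (· < ·) := List.sortedLT_iff_pairwise.1 (Finset.sortedLT_sort s)
  have hmem : ∀ a, a ∈ L ↔ a ∈ s := fun a => Finset.mem_sort _
  have hsx : (L.map x).Pairwise (· < ·) := List.Pairwise.map _ (fun _ _ h => hx h) hLlt
  have hsy : (L.map y).Pairwise (· < ·) := List.Pairwise.map _ (fun _ _ h => hy h) hLlt
  have hnx : (L.map x).Nodup := hsx.imp (fun h => ne_of_lt h)
  have hny : (L.map y).Nodup := hsy.imp (fun h => ne_of_lt h)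
  have htf : (L.map x).toFinset = (L.map y).toFinset := by
    have key : ∀ (f : Fin n → ℕ) (c : ℕ), c ∈ (L.map f).toFinset ↔ c ∈ s.image f := by
      intro f c
      simp only [List.mem_toFinset, List.mem_map, Finset.mem_image, hmem]
    ext c
    rw [key, key, h]
  have hperm : (L.map x).Perm (L.map y) :=
    List.perm_of_nodup_nodup_toFinset_eq hnx hny htf
  have heq : L.map x = L.map y :=
    List.Perm.eq_of_pairwise' (hsx.imp (fun h => le_of_lt h))
      (hsy.imp (fun h => le_of_lt h)) hperm
  intro i hi
  exact list_map_eq L x y heq i ((hmem i).2 hi)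

/-- `C(m-k, n-k) * m^k ≤ C(m, n) * n^k` for `k ≤ n ≤ m`. -/
private lemma choose_ratio (m n : ℕ) (hnm : n ≤ m) :
    ∀ k ≤ n, (Nat.choose (m - k) (n - k) : ℝ) * (m : ℝ) ^ k ≤
      (Nat.choose m n : ℝ) * (n : ℝ) ^ k := by
  intro k
  induction k with
  | zero => simp
  | succ k ih =>
    intro hk
    have hkn : k < n := Nat.lt_of_succ_le hk
    have hkm : k < m := lt_of_lt_of_le hkn hnm
    have ihk := ih (le_of_lt hkn)
    obtain ⟨a, ha⟩ : ∃ a, m - k = a + 1 := ⟨m - k - 1, by omega⟩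
    obtain ⟨b, hb⟩ : ∃ b, n - k = b + 1 := ⟨n - k - 1, by omega⟩
    have hma : m - (k + 1) = a := by omega
    have hnb : n - (k + 1) = b := by omega
    have hid : (a + 1) * Nat.choose a b = Nat.choose (a + 1) (b + 1) * (b + 1) :=
      Nat.add_one_mul_choose_eq a b
    have hidR : ((a : ℝ) + 1) * (Nat.choose a b : ℝ) =
        (Nat.choose (a + 1) (b + 1) : ℝ) * ((b : ℝ) + 1) := by exact_mod_cast hid
    rw [ha, hb] at ihk
    rw [hma, hnb]
    have ha0 : (0 : ℝ) < (a : ℝ) + 1 := by positivity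
    have e1 : (m : ℝ) - k = (a : ℝ) + 1 := by
      have h1 : k ≤ m := le_of_lt hkm
      have : ((m - k : ℕ) : ℝ) = ((a + 1 : ℕ) : ℝ) := by rw [ha]
      push_cast [h1] at this
      linarith
    have e2 : (n : ℝ) - k = (b : ℝ) + 1 := by
      have h1 : k ≤ n := le_of_lt hkn
      have : ((n - k : ℕ) : ℝ) = ((b + 1 : ℕ) : ℝ) := by rw [hb]
      push_cast [h1] at this
      linarith
    have hkey : (m : ℝ) * ((b : ℝ) + 1) ≤ (n : ℝ) * ((a : ℝ) + 1) := by
      have hmn : (n : ℝ) ≤ m := by exact_mod_cast hnm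
      have hk0 : (0 : ℝ) ≤ (k : ℝ) := by positivity
      nlinarith [mul_le_mul_of_nonneg_right hmn hk0]
    have hCk : (Nat.choose a b : ℝ) =
        (Nat.choose (a + 1) (b + 1) : ℝ) * ((b : ℝ) + 1) / ((a : ℝ) + 1) := by
      field_simp
      linarith [hidR]
    rw [hCk, pow_succ, pow_succ]
    calc (Nat.choose (a + 1) (b + 1) : ℝ) * ((b : ℝ) + 1) / ((a : ℝ) + 1) *
          ((m : ℝ) ^ k * m)
        = ((Nat.choose (a + 1) (b + 1) : ℝ) * (m : ℝ) ^ k) *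
            ((m : ℝ) * ((b : ℝ) + 1) / ((a : ℝ) + 1)) := by
          field_simp
      _ ≤ ((Nat.choose m n : ℝ) * (n : ℝ) ^ k) *
            ((m : ℝ) * ((b : ℝ) + 1) / ((a : ℝ) + 1)) := by
          apply mul_le_mul_of_nonneg_right ihk
          positivity
      _ ≤ ((Nat.choose m n : ℝ) * (n : ℝ) ^ k) * (n : ℝ) := by
          apply mul_le_mul_of_nonneg_left _ (by positivity)
          rw [div_le_iff₀ ha0]
          nlinarith [hkey]
      _ = (Nat.choose m n : ℝ) * ((n : ℝ) ^ k * n) := by ring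

/-- Key estimate in the proof of Claim 3.3: for `5 ∣ n`, `n ≤ m` and a strictly
increasing `z ∈ {1,…,m}^n`, the number of strictly increasing sequences
`x ∈ {1,…,m}^n` agreeing with `z` on a set `S` of size `n/5` is at most
`(n/m)^{n/5} · (5e/4)^{4n/5} · C(m,n)`. -/
theorem stmt3 (n m : ℕ) (hn : 0 < n) (h5 : 5 ∣ n) (hm : n ≤ m)
    (z : Fin n → ℕ) (hz : StrictMono z) (hzr : ∀ i, 1 ≤ z i ∧ z i ≤ m)
    (S : Finset (Fin n)) (hS : S.card = n / 5) :
    (Set.ncard {x : Fin n → ℕ | StrictMono x ∧ (∀ i, 1 ≤ x i ∧ x i ≤ m) ∧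
        ∀ i ∈ S, x i = z i} : ℝ) ≤
      ((n : ℝ) / (m : ℝ)) ^ (n / 5) * (5 * Real.exp 1 / 4) ^ (4 * n / 5) *
        (Nat.choose m n : ℝ) := by
  classical
  set k := n / 5 with hk
  have hkn : k ≤ n := Nat.div_le_self n 5
  set A : Set (Fin n → ℕ) := {x : Fin n → ℕ | StrictMono x ∧ (∀ i, 1 ≤ x i ∧ x i ≤ m) ∧
      ∀ i ∈ S, x i = z i} with hA
  set T : Finset ℕ := (Finset.Icc 1 m) \ (S.image z) with hT
  have hzsub : S.image z ⊆ Finset.Icc 1 m := by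
    intro a ha
    rcases Finset.mem_image.1 ha with ⟨i, _, rfl⟩
    exact Finset.mem_Icc.2 ⟨(hzr i).1, (hzr i).2⟩
  have hTcard : T.card = m - k := by
    rw [hT, Finset.card_sdiff_of_subset hzsub, Nat.card_Icc,
      Finset.card_image_of_injective _ hz.injective, hS]
    omega
  -- the injection into subsets
  have hinj : (A.ncard : ℝ) ≤ (Nat.choose (m - k) (n - k) : ℝ) := by
    have hle : A.ncard ≤ (Finset.powersetCard (n - k) T : Set (Finset ℕ)).ncard := by
      apply Set.ncard_le_ncard_of_injOn (fun x => Sᶜ.image x)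
      · rintro x ⟨hxm, hxr, hxS⟩
        simp only [Finset.mem_coe]
        rw [Finset.mem_powersetCard]
        constructor
        · intro a ha
          rcases Finset.mem_image.1 ha with ⟨i, hi, rfl⟩
          rw [hT, Finset.mem_sdiff]
          refine ⟨Finset.mem_Icc.2 ⟨(hxr i).1, (hxr i).2⟩, ?_⟩
          intro hmem
          rcases Finset.mem_image.1 hmem with ⟨j, hj, hji⟩
          have : x j = x i := by rw [hxS j hj, hji]
          have : j = i := hxm.injective this
          rw [this] at hj
          exact (Finset.mem_compl.1 hi) hj
        · rw [Finset.card_image_of_injective _ hxm.injective, Finset.card_compl,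
            Fintype.card_fin, hS]
      · rintro x ⟨hxm, _, hxS⟩ y ⟨hym, _, hyS⟩ hxy
        have hcompl : ∀ i ∈ Sᶜ, x i = y i :=
          eq_on_of_image_eq Sᶜ x y hxm hym hxy
        funext i
        by_cases hi : i ∈ S
        · rw [hxS i hi, hyS i hi]
        · exact hcompl i (Finset.mem_compl.2 hi)
    have : (Finset.powersetCard (n - k) T : Set (Finset ℕ)).ncard =
        Nat.choose (m - k) (n - k) := by
      rw [Set.ncard_coe_finset, Finset.card_powersetCard, hTcard]
    rw [this] at hle
    exact_mod_cast hle
  -- the binomial estimate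
  have hm0 : (0 : ℝ) < (m : ℝ) := by
    have : 0 < m := lt_of_lt_of_le hn hm
    exact_mod_cast this
  have hchoose : (Nat.choose (m - k) (n - k) : ℝ) ≤
      ((n : ℝ) / (m : ℝ)) ^ k * (Nat.choose m n : ℝ) := by
    have h1 := choose_ratio m n hm k hkn
    rw [div_pow, div_mul_eq_mul_div, le_div_iff₀ (by positivity)]
    linarith [h1]
  have hone : (1 : ℝ) ≤ (5 * Real.exp 1 / 4) ^ (4 * n / 5) := by
    have h1 : (1 : ℝ) ≤ Real.exp 1 := by
      nlinarith [Real.add_one_le_exp (1 : ℝ), Real.exp_pos (1 : ℝ)]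
    have h45 : 4 * n / 5 ≠ 0 := by omega
    exact (one_le_pow_iff_of_nonneg (by positivity) h45).2 (by linarith)
  calc (A.ncard : ℝ) ≤ (Nat.choose (m - k) (n - k) : ℝ) := hinj
    _ ≤ ((n : ℝ) / (m : ℝ)) ^ k * (Nat.choose m n : ℝ) := hchoose
    _ ≤ ((n : ℝ) / (m : ℝ)) ^ k * (5 * Real.exp 1 / 4) ^ (4 * n / 5) *
        (Nat.choose m n : ℝ) := by
        have hnn : (0 : ℝ) ≤ ((n : ℝ) / (m : ℝ)) ^ k := by positivity
        have hC : (0 : ℝ) ≤ (Nat.choose m n : ℝ) := by positivity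
        exact mul_le_mul_of_nonneg_right (le_mul_of_one_le_right hnn hone) hC
end

section
/- Let n be a positive multiple of 4 and let u ∈ {0,1}^{n/4}. Then lis(z(u, u)) ≥ n/2. -/
/-- The block of length 4 used in the type 1 order gadget: `i` is the `0`-indexed
block number (the paper's block number is `i+1`), and `a, b` are the bits `u_{i+1}`,
`v_{i+1}`. -/
def zblock (i : ℕ) (a b : Bool) : Fin 4 → ℕ :=
  match a, b with
  | false, false => ![0, 0, 2 * i + 1, 2 * i + 2]
  | true,  false => ![2 * i + 1, 0, 0, 2 * i + 2]
  | false, true  => ![0, 2 * i + 2, 2 * i + 1, 0]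
  | true,  true  => ![2 * i + 1, 2 * i + 2, 0, 0]

/-- The sequence `z(u,v) ∈ ℕ^n`: the concatenation of the `n/4` blocks. -/
def zseq (n : ℕ) (hn : 4 ∣ n) (u v : Fin (n / 4) → Bool) : Fin n → ℕ :=
  fun j =>
    zblock ((j : ℕ) / 4)
      (u ⟨(j : ℕ) / 4, by have := j.isLt; omega⟩)
      (v ⟨(j : ℕ) / 4, by have := j.isLt; omega⟩)
      ⟨(j : ℕ) % 4, by omega⟩

def gfun (n : ℕ) (h4 : 4 ∣ n) (u : Fin (n / 4) → Bool) (m : Fin (n / 2)) : Fin n :=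
  ⟨4 * ((m : ℕ) / 2) + (m : ℕ) % 2 +
      (if u ⟨(m : ℕ) / 2, by obtain ⟨k, rfl⟩ := h4; have := m.isLt; omega⟩ then 0 else 2),
   by obtain ⟨k, rfl⟩ := h4; have := m.isLt; split <;> omega⟩

lemma zseq_apply (n : ℕ) (h4 : 4 ∣ n) (u v : Fin (n / 4) → Bool) (j : Fin n)
    (q : Fin (n / 4)) (r : Fin 4) (h : (j : ℕ) = 4 * (q : ℕ) + (r : ℕ)) :
    zseq n h4 u v j = zblock q (u q) (v q) r := by
  have h1 : (j : ℕ) / 4 = q := by have := r.isLt; omega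
  have h2 : (j : ℕ) % 4 = r := by have := r.isLt; omega
  simp only [zseq, h1, h2, Fin.eta]

lemma zseq_g (n : ℕ) (h4 : 4 ∣ n) (u : Fin (n / 4) → Bool) (m : Fin (n / 2)) :
    zseq n h4 u u (gfun n h4 u m) = (m : ℕ) + 1 := by
  have hq : (m : ℕ) / 2 < n / 4 := by obtain ⟨k, rfl⟩ := h4; have := m.isLt; omega
  set q : Fin (n / 4) := ⟨(m : ℕ) / 2, hq⟩ with hqdef
  have hval : (gfun n h4 u m : ℕ) = 4 * ((m : ℕ) / 2) + (m : ℕ) % 2 +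
      (if u q then 0 else 2) := rfl
  rcases Nat.mod_two_eq_zero_or_one (m : ℕ) with h2 | h2 <;>
  cases hb : u q
  · rw [zseq_apply n h4 u u _ q ⟨2, by omega⟩ (by rw [hval, hb, h2]; simp [hqdef]), hb]
    simp [zblock, hqdef]; omega
  · rw [zseq_apply n h4 u u _ q ⟨0, by omega⟩ (by rw [hval, hb, h2]; simp [hqdef]), hb]
    simp [zblock, hqdef]; omega
  · rw [zseq_apply n h4 u u _ q ⟨3, by omega⟩ (by rw [hval, hb, h2]; simp [hqdef]), hb]
    simp [zblock, hqdef]; omega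
  · rw [zseq_apply n h4 u u _ q ⟨1, by omega⟩ (by rw [hval, hb, h2]; simp [hqdef]), hb]
    simp [zblock, hqdef]; omega

lemma gfun_mono (n : ℕ) (h4 : 4 ∣ n) (u : Fin (n / 4) → Bool) :
    StrictMono (gfun n h4 u) := by
  intro a b hab
  have hab' : (a : ℕ) < b := hab
  rw [Fin.lt_def]
  show 4 * ((a : ℕ) / 2) + (a : ℕ) % 2 + _ < 4 * ((b : ℕ) / 2) + (b : ℕ) % 2 + _
  rcases lt_or_eq_of_le (Nat.div_le_div_right (c := 2) hab'.le) with h | h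
  · split <;> split <;> omega
  · have hfin : (⟨(a : ℕ) / 2, by obtain ⟨k, rfl⟩ := h4; have := a.isLt; omega⟩ : Fin (n/4)) =
        ⟨(b : ℕ) / 2, by obtain ⟨k, rfl⟩ := h4; have := b.isLt; omega⟩ := by
      ext; exact h
    simp only [hfin]
    split <;> omega


/-- The `u = v` case of the gadget analysis in the proof of Theorem 1.4:
`lis(z(u,u)) ≥ n/2`. -/
theorem stmt5 (n : ℕ) (hn : 0 < n) (h4 : 4 ∣ n) (u : Fin (n / 4) → Bool) :
    n / 2 ≤ lis (zseq n h4 u u) := by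
  classical
  set T : Finset (Fin n) := Finset.image (gfun n h4 u) Finset.univ with hT
  have hinj := (gfun_mono n h4 u).injective
  have hcard : T.card = n / 2 := by
    rw [hT, Finset.card_image_of_injective _ hinj, Finset.card_univ, Fintype.card_fin]
  have hmem : T ∈ Finset.univ.filter fun S : Finset (Fin n) =>
      ∀ i ∈ S, ∀ j ∈ S, i < j → zseq n h4 u u i < zseq n h4 u u j := by
    simp only [Finset.mem_filter, Finset.mem_univ, true_and]
    intro i hi j hj hij
    obtain ⟨a, -, rfl⟩ := Finset.mem_image.mp hi
    obtain ⟨b, -, rfl⟩ := Finset.mem_image.mp hj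
    have hab : a < b := (gfun_mono n h4 u).lt_iff_lt.mp hij
    rw [zseq_g, zseq_g]
    have : (a : ℕ) < b := hab
    omega
  calc n / 2 = T.card := hcard.symm
    _ ≤ lis (zseq n h4 u u) := Finset.le_sup hmem
end

section
/- Let n be a positive multiple of 4 and let u, v ∈ {0,1}^{n/4}. Then lis(z(u, v)) ≤ n/2 − |{i ∈ {1, …, n/4} : u_i = 0 and v_i = 1}| + 1. -/
lemma zblock_res_ff (i : ℕ) (r : Fin 4) (h : zblock i false false r ≠ 0) :
    (r : ℕ) = 2 ∨ (r : ℕ) = 3 := by fin_cases r <;> simp_all [zblock]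
lemma zblock_res_tf (i : ℕ) (r : Fin 4) (h : zblock i true false r ≠ 0) :
    (r : ℕ) = 0 ∨ (r : ℕ) = 3 := by fin_cases r <;> simp_all [zblock]
lemma zblock_res_tt (i : ℕ) (r : Fin 4) (h : zblock i true true r ≠ 0) :
    (r : ℕ) = 0 ∨ (r : ℕ) = 1 := by fin_cases r <;> simp_all [zblock]
lemma zblock_res_ft (i : ℕ) (r : Fin 4) (h : zblock i false true r ≠ 0) :
    (r : ℕ) = 1 ∨ (r : ℕ) = 2 := by fin_cases r <;> simp_all [zblock]


/-- Upper-bound part of the gadget analysis in the proof of Theorem 1.4: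
`lis(z(u,v)) ≤ n/2 − |{i : u_i = 0 ∧ v_i = 1}| + 1`. -/
theorem stmt6 (n : ℕ) (hn : 0 < n) (h4 : 4 ∣ n) (u v : Fin (n / 4) → Bool) :
    lis (zseq n h4 u v) ≤
      n / 2 - (Finset.univ.filter fun i => u i = false ∧ v i = true).card + 1 := by
  classical
  unfold lis
  refine Finset.sup_le ?_
  intro T hT
  rw [Finset.mem_filter] at hT
  set k := (Finset.univ.filter fun i => u i = false ∧ v i = true).card with hk
  set z := zseq n h4 u v with hz
  have hm2 : n / 2 = 2 * (n / 4) := by omega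
  have hinc : ∀ i ∈ T, ∀ j ∈ T, i < j → z i < z j := hT.2
  have hsplit : (T.filter fun j => z j = 0).card + (T.filter fun j => ¬ z j = 0).card = T.card :=
    Finset.card_filter_add_card_filter_not _
  have h0 : (T.filter fun j => z j = 0).card ≤ 1 := by
    refine Finset.card_le_one.mpr ?_
    intro a ha b hb
    simp only [Finset.mem_filter] at ha hb
    by_contra hne
    rcases lt_or_gt_of_ne hne with h | h
    · have := hinc a ha.1 b hb.1 h
      omega
    · have := hinc b hb.1 a ha.1 h
      omega
  set T1 := T.filter fun j => ¬ z j = 0 with hT1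
  set f : Fin n → Fin (n / 4) := fun j => ⟨(j : ℕ) / 4, by have := j.isLt; omega⟩ with hf
  have hfib : T1.card = ∑ i : Fin (n / 4), (T1.filter fun j => f j = i).card :=
    Finset.card_eq_sum_card_fiberwise (fun x _ => Finset.mem_univ (f x))
  have key : ∀ i : Fin (n / 4), ∀ j : Fin n, f j = i →
      z j = zblock (i : ℕ) (u i) (v i) ⟨(j : ℕ) % 4, by omega⟩ := by
    intro i j hji
    have h1 : z j = zblock ((f j : Fin (n / 4)) : ℕ) (u (f j)) (v (f j))
        ⟨(j : ℕ) % 4, by omega⟩ := rfl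
    rw [h1, hji]
  have hbound : ∀ i : Fin (n / 4), (T1.filter fun j => f j = i).card ≤
      if u i = false ∧ v i = true then 1 else 2 := by
    intro i
    have hmem : ∀ j ∈ T1.filter fun j => f j = i,
        j ∈ T ∧ z j ≠ 0 ∧ (j : ℕ) / 4 = (i : ℕ) ∧
          z j = zblock (i : ℕ) (u i) (v i) ⟨(j : ℕ) % 4, by omega⟩ := by
      intro j hj
      simp only [hT1, Finset.mem_filter, and_assoc] at hj
      exact ⟨hj.1, hj.2.1, congrArg Fin.val hj.2.2, key i j hj.2.2⟩
    by_cases hspec : u i = false ∧ v i = true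
    · simp only [hspec, and_self, if_true]
      refine Finset.card_le_one.mpr ?_
      intro a ha b hb
      obtain ⟨haT, haz, had, hav⟩ := hmem a ha
      obtain ⟨hbT, hbz, hbd, hbv⟩ := hmem b hb
      rw [hspec.1, hspec.2] at hav hbv
      have hra := zblock_res_ft (i : ℕ) _ (hav ▸ haz)
      have hrb := zblock_res_ft (i : ℕ) _ (hbv ▸ hbz)
      simp only at hra hrb
      by_contra hne
      have hvne : (a : ℕ) ≠ (b : ℕ) := fun h => hne (Fin.ext h)
      rcases lt_or_gt_of_ne hvne with h | h
      · have hlt := hinc a haT b hbT (Fin.lt_def.mpr h)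
        have hma : (a : ℕ) % 4 = 1 := by omega
        have hmb : (b : ℕ) % 4 = 2 := by omega
        rw [hav, hbv] at hlt
        simp only [hma, hmb] at hlt
        have e1 : zblock (i:ℕ) false true ⟨1, by omega⟩ = 2*(i:ℕ)+2 := rfl
        have e2 : zblock (i:ℕ) false true ⟨2, by omega⟩ = 2*(i:ℕ)+1 := rfl
        rw [e1, e2] at hlt
        omega
      · have hlt := hinc b hbT a haT (Fin.lt_def.mpr h)
        have hma : (a : ℕ) % 4 = 2 := by omega
        have hmb : (b : ℕ) % 4 = 1 := by omega
        rw [hav, hbv] at hlt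
        simp only [hma, hmb] at hlt
        have e1 : zblock (i:ℕ) false true ⟨1, by omega⟩ = 2*(i:ℕ)+2 := rfl
        have e2 : zblock (i:ℕ) false true ⟨2, by omega⟩ = 2*(i:ℕ)+1 := rfl
        rw [e1, e2] at hlt
        omega
    · simp only [hspec, if_false]
      by_contra hgt
      push_neg at hgt
      obtain ⟨a, ha, b, hb, c, hc, hab, hac, hbc⟩ := Finset.two_lt_card.mp hgt
      obtain ⟨haT, haz, had, hav⟩ := hmem a ha
      obtain ⟨hbT, hbz, hbd, hbv⟩ := hmem b hb
      obtain ⟨hcT, hcz, hcd, hcv⟩ := hmem c hc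
      have hvab : (a : ℕ) ≠ (b : ℕ) := fun h => hab (Fin.ext h)
      have hvac : (a : ℕ) ≠ (c : ℕ) := fun h => hac (Fin.ext h)
      have hvbc : (b : ℕ) ≠ (c : ℕ) := fun h => hbc (Fin.ext h)
      rcases Bool.eq_false_or_eq_true (u i) with hu | hu <;>
        rcases Bool.eq_false_or_eq_true (v i) with hv | hv
      · -- true true
        rw [hu, hv] at hav hbv hcv
        have hra := zblock_res_tt (i : ℕ) _ (hav ▸ haz)
        have hrb := zblock_res_tt (i : ℕ) _ (hbv ▸ hbz)
        have hrc := zblock_res_tt (i : ℕ) _ (hcv ▸ hcz)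
        simp only at hra hrb hrc
        omega
      · -- true false
        rw [hu, hv] at hav hbv hcv
        have hra := zblock_res_tf (i : ℕ) _ (hav ▸ haz)
        have hrb := zblock_res_tf (i : ℕ) _ (hbv ▸ hbz)
        have hrc := zblock_res_tf (i : ℕ) _ (hcv ▸ hcz)
        simp only at hra hrb hrc
        omega
      · -- false true
        exact hspec ⟨hu, hv⟩
      · -- false false
        rw [hu, hv] at hav hbv hcv
        have hra := zblock_res_ff (i : ℕ) _ (hav ▸ haz)
        have hrb := zblock_res_ff (i : ℕ) _ (hbv ▸ hbz)
        have hrc := zblock_res_ff (i : ℕ) _ (hcv ▸ hcz)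
        simp only at hra hrb hrc
        omega
  have hsum : (∑ i : Fin (n / 4), if u i = false ∧ v i = true then 1 else 2) + k = 2 * (n / 4) := by
    rw [hk, Finset.card_filter, ← Finset.sum_add_distrib]
    have h2 : ∀ i : Fin (n / 4), ((if u i = false ∧ v i = true then 1 else 2)
        + (if u i = false ∧ v i = true then 1 else 0)) = 2 := by
      intro i; split <;> rfl
    rw [Finset.sum_congr rfl fun i _ => h2 i]
    simp [Finset.card_univ, Nat.mul_comm]
  have hT1sum : T1.card ≤ ∑ i : Fin (n / 4), if u i = false ∧ v i = true then 1 else 2 := by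
    rw [hfib]
    exact Finset.sum_le_sum fun i _ => hbound i
  omega
end

section
/- Let n be a positive multiple of 4 and let u, v ∈ {0,1}^{n/4} be such that the Hamming distance between u and v satisfies 16 · |{i : u_i ≠ v_i}| ≥ n. Then min(lis(z(u, v)), lis(z(v, u))) ≤ 15n/32 + 1. -/
/-- Capacity of a block: how many positive entries can be used. -/
def cap (a b : Bool) : ℕ := if a = false ∧ b = true then 1 else 2

/-- The block number of a position. -/
def blk (n : ℕ) (hn : 4 ∣ n) (j : Fin n) : Fin (n / 4) :=
  ⟨(j : ℕ) / 4, by have := j.isLt; omega⟩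

lemma zseq_eq (n : ℕ) (hn : 4 ∣ n) (u v : Fin (n / 4) → Bool) (j : Fin n)
    (i : Fin (n / 4)) (h : (j : ℕ) / 4 = (i : ℕ)) :
    zseq n hn u v j = zblock i (u i) (v i) ⟨(j : ℕ) % 4, Nat.mod_lt _ (by norm_num)⟩ := by
  simp only [zseq, h, Fin.eta]

lemma card_le_two_res {n : ℕ} (S : Finset (Fin n)) (p q : ℕ)
    (hres : ∀ j ∈ S, (j : ℕ) % 4 = p ∨ (j : ℕ) % 4 = q)
    (hdiv : ∀ a ∈ S, ∀ b ∈ S, (a : ℕ) / 4 = (b : ℕ) / 4) :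
    S.card ≤ 2 := by
  have hmapsto : ∀ j ∈ S, (fun j : Fin n => (j : ℕ) % 4) j ∈ ({p, q} : Finset ℕ) := by
    intro j hj
    rcases hres j hj with h | h <;> simp [h]
  have hinj : (↑S : Set (Fin n)).InjOn (fun j : Fin n => (j : ℕ) % 4) := by
    intro a ha b hb hab
    have := hdiv a (by simpa using ha) b (by simpa using hb)
    simp only at hab
    apply Fin.ext
    omega
  have h1 : S.card ≤ ({p, q} : Finset ℕ).card :=
    Finset.card_le_card_of_injOn _ hmapsto hinj
  have h2 : ({p, q} : Finset ℕ).card ≤ 2 := by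
    apply le_trans (Finset.card_insert_le _ _)
    simp
  omega

lemma fiber_le (n : ℕ) (hn : 4 ∣ n) (u v : Fin (n / 4) → Bool)
    (T : Finset (Fin n))
    (hinc : ∀ a ∈ T, ∀ b ∈ T, a < b → zseq n hn u v a < zseq n hn u v b)
    (i : Fin (n / 4)) :
    ((T.filter fun j => ¬ zseq n hn u v j = 0).filter fun j => blk n hn j = i).card
      ≤ cap (u i) (v i) := by
  set S := (T.filter fun j => ¬ zseq n hn u v j = 0).filter fun j => blk n hn j = i with hS
  have hmem : ∀ j ∈ S, j ∈ T ∧ zseq n hn u v j ≠ 0 ∧ (j : ℕ) / 4 = (i : ℕ) := by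
    intro j hj
    rw [hS, Finset.mem_filter, Finset.mem_filter] at hj
    exact ⟨hj.1.1, hj.1.2, congrArg Fin.val hj.2⟩
  have hx : ∀ j ∈ S,
      zseq n hn u v j = zblock i (u i) (v i) ⟨(j : ℕ) % 4, Nat.mod_lt _ (by norm_num)⟩ :=
    fun j hj => zseq_eq n hn u v j i (hmem j hj).2.2
  -- residues of elements of S are nonzero positions of the block
  have hresgen : ∀ j ∈ S, ∀ (P : ℕ → Prop),
      (∀ p : Fin 4, zblock i (u i) (v i) p ≠ 0 → P (p : ℕ)) → P ((j : ℕ) % 4) := by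
    intro j hj P hP
    have h0 := (hmem j hj).2.1
    rw [hx j hj] at h0
    exact hP _ h0
  have hdiv : ∀ a ∈ S, ∀ b ∈ S, (a : ℕ) / 4 = (b : ℕ) / 4 := by
    intro a ha b hb
    rw [(hmem a ha).2.2, (hmem b hb).2.2]
  cases hu : u i <;> cases hv : v i
  · -- (false, false): nonzero positions are 2, 3
    have := card_le_two_res S 2 3 (fun j hj =>
      hresgen j hj (fun r => r = 2 ∨ r = 3) (fun p hp => by
        revert hp
        fin_cases p <;> simp [zblock, hu, hv])) hdiv
    calc S.card ≤ 2 := this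
      _ ≤ cap false false := by simp [cap]
  · -- (false, true): nonzero positions are 1, 2, and they conflict
    have hres : ∀ j ∈ S, (j : ℕ) % 4 = 1 ∨ (j : ℕ) % 4 = 2 := fun j hj =>
      hresgen j hj (fun r => r = 1 ∨ r = 2) (fun p hp => by
        revert hp
        fin_cases p <;> simp [zblock, hu, hv])
    have hone : S.card ≤ 1 := by
      apply Finset.card_le_one.2
      intro a ha b hb
      have hai := (hmem a ha).2.2
      have hbi := (hmem b hb).2.2
      have hva : zseq n hn u v a
          = zblock i (u i) (v i) ⟨(a : ℕ) % 4, Nat.mod_lt _ (by norm_num)⟩ := hx a ha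
      have hvb : zseq n hn u v b
          = zblock i (u i) (v i) ⟨(b : ℕ) % 4, Nat.mod_lt _ (by norm_num)⟩ := hx b hb
      rcases hres a ha with h1 | h1 <;> rcases hres b hb with h2 | h2
      · apply Fin.ext; omega
      · exfalso
        have hab : a < b := by rw [Fin.lt_def]; omega
        have hlt := hinc a (hmem a ha).1 b (hmem b hb).1 hab
        rw [hva, hvb, hu, hv] at hlt
        have e1 : (⟨(a : ℕ) % 4, Nat.mod_lt _ (by norm_num)⟩ : Fin 4) = ⟨1, by norm_num⟩ :=
          Fin.ext h1
        have e2 : (⟨(b : ℕ) % 4, Nat.mod_lt _ (by norm_num)⟩ : Fin 4) = ⟨2, by norm_num⟩ :=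
          Fin.ext h2
        rw [e1, e2] at hlt
        simp [zblock] at hlt
      · exfalso
        have hab : b < a := by rw [Fin.lt_def]; omega
        have hlt := hinc b (hmem b hb).1 a (hmem a ha).1 hab
        rw [hva, hvb, hu, hv] at hlt
        have e1 : (⟨(a : ℕ) % 4, Nat.mod_lt _ (by norm_num)⟩ : Fin 4) = ⟨2, by norm_num⟩ :=
          Fin.ext h1
        have e2 : (⟨(b : ℕ) % 4, Nat.mod_lt _ (by norm_num)⟩ : Fin 4) = ⟨1, by norm_num⟩ :=
          Fin.ext h2
        rw [e1, e2] at hlt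
        simp [zblock] at hlt
      · apply Fin.ext; omega
    calc S.card ≤ 1 := hone
      _ ≤ cap false true := by simp [cap]
  · -- (true, false): nonzero positions are 0, 3
    have := card_le_two_res S 0 3 (fun j hj =>
      hresgen j hj (fun r => r = 0 ∨ r = 3) (fun p hp => by
        revert hp
        fin_cases p <;> simp [zblock, hu, hv])) hdiv
    calc S.card ≤ 2 := this
      _ ≤ cap true false := by simp [cap]
  · -- (true, true): nonzero positions are 0, 1
    have := card_le_two_res S 0 1 (fun j hj =>
      hresgen j hj (fun r => r = 0 ∨ r = 1) (fun p hp => by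
        revert hp
        fin_cases p <;> simp [zblock, hu, hv])) hdiv
    calc S.card ≤ 2 := this
      _ ≤ cap true true := by simp [cap]

lemma lis_le_sum (n : ℕ) (hn : 4 ∣ n) (u v : Fin (n / 4) → Bool) :
    lis (zseq n hn u v) ≤ 1 + ∑ i : Fin (n / 4), cap (u i) (v i) := by
  apply Finset.sup_le
  intro T hT
  have hinc : ∀ a ∈ T, ∀ b ∈ T, a < b → zseq n hn u v a < zseq n hn u v b := by
    simpa using (Finset.mem_filter.1 hT).2
  have hsplit := Finset.card_filter_add_card_filter_not (s := T)
    (p := fun j => zseq n hn u v j = 0)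
  have hZ : (T.filter fun j => zseq n hn u v j = 0).card ≤ 1 := by
    apply Finset.card_le_one.2
    intro a ha b hb
    simp only [Finset.mem_filter] at ha hb
    by_contra hne
    rcases lt_or_gt_of_ne hne with h | h
    · have := hinc a ha.1 b hb.1 h
      rw [ha.2, hb.2] at this; exact absurd this (lt_irrefl 0)
    · have := hinc b hb.1 a ha.1 h
      rw [ha.2, hb.2] at this; exact absurd this (lt_irrefl 0)
  have hP : (T.filter fun j => ¬ zseq n hn u v j = 0).card =
      ∑ i : Fin (n / 4),
        (((T.filter fun j => ¬ zseq n hn u v j = 0)).filter fun j => blk n hn j = i).card :=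
    Finset.card_eq_sum_card_fiberwise (fun j _ => Finset.mem_univ _)
  have hfib := fun i => fiber_le n hn u v T hinc i
  have hPle : (T.filter fun j => ¬ zseq n hn u v j = 0).card ≤
      ∑ i : Fin (n / 4), cap (u i) (v i) := by
    rw [hP]; exact Finset.sum_le_sum fun i _ => hfib i
  omega

lemma sum_cap (m : ℕ) (u v : Fin m → Bool) :
    ∑ i : Fin m, cap (u i) (v i)
      + (Finset.univ.filter fun i => u i = false ∧ v i = true).card = 2 * m := by
  classical
  rw [Finset.card_filter, ← Finset.sum_add_distrib]
  have : ∀ i : Fin m,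
      cap (u i) (v i) + (if u i = false ∧ v i = true then 1 else 0) = 2 := by
    intro i; unfold cap; split <;> simp
  rw [Finset.sum_congr rfl fun i _ => this i]
  simp [Finset.card_univ, mul_comm]

lemma card_split (m : ℕ) (u v : Fin m → Bool) :
    (Finset.univ.filter fun i => u i ≠ v i).card =
      (Finset.univ.filter fun i => u i = false ∧ v i = true).card +
      (Finset.univ.filter fun i => v i = false ∧ u i = true).card := by
  classical
  rw [Finset.card_filter, Finset.card_filter, Finset.card_filter, ← Finset.sum_add_distrib]
  apply Finset.sum_congr rfl
  intro i _
  cases h1 : u i <;> cases h2 : v i <;> simp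

/-- Fooling-set separation in the proof of Theorem 1.4: if the Hamming distance
of `u` and `v` is at least `n/16`, then
`min(lis(z(u,v)), lis(z(v,u))) ≤ 15n/32 + 1`. -/
theorem stmt7 (n : ℕ) (hn : 0 < n) (h4 : 4 ∣ n) (u v : Fin (n / 4) → Bool)
    (hdist : n ≤ 16 * (Finset.univ.filter fun i => u i ≠ v i).card) :
    min (lis (zseq n h4 u v)) (lis (zseq n h4 v u)) ≤ 15 * n / 32 + 1 := by
  have h1 := lis_le_sum n h4 u v
  have h2 := lis_le_sum n h4 v u
  have hs1 := sum_cap (n / 4) u v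
  have hs2 := sum_cap (n / 4) v u
  have hsplit := card_split (n / 4) u v
  omega
end

section
/- Let m ≥ 1 and let A, B ⊆ {1, …, m} with |A| = |B| = k. Define the sequence x̃ of length 2m + 1 by x̃_1 = 0 and, for each i ∈ {1, …, m}, x̃_{2i} = 2i if i ∈ A and x̃_{2i} = 0 otherwise, and x̃_{2i+1} = 2i − 1 if i ∈ B and x̃_{2i+1} = 0 otherwise. Then: if A ∩ B = ∅ one has lis(x̃) = 2k + 1, and if A ∩ B ≠ ∅ one has lis(x̃) ≤ 2k. -/
/-- The sequence `x̃` of length `2m+1` built from `A, B ⊆ {1,…,m}`: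
`x̃_1 = 0`; for `i ∈ {1,…,m}`, `x̃_{2i} = 2i` if `i ∈ A` (else `0`) and
`x̃_{2i+1} = 2i−1` if `i ∈ B` (else `0`).  Here the `1`-indexed position of
`j : Fin (2m+1)` is `(j : ℕ) + 1`. -/
def xt (m : ℕ) (A B : Finset ℕ) : Fin (2 * m + 1) → ℕ :=
  fun j =>
    let p := (j : ℕ) + 1
    if p = 1 then 0
    else if p % 2 = 0 then (if p / 2 ∈ A then p else 0)
    else (if (p - 1) / 2 ∈ B then p - 2 else 0)

lemma xt_posA (m : ℕ) (A B : Finset ℕ) (i : ℕ) (hi : 1 ≤ i) (hiA : i ∈ A)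
    (j : Fin (2*m+1)) (hj : (j:ℕ) = 2*i - 1) : xt m A B j = 2*i := by
  have h1 : (j:ℕ) + 1 = 2*i := by omega
  simp only [xt, h1]
  rw [if_neg (by omega), if_pos (by omega : 2*i % 2 = 0),
    show 2*i/2 = i by omega, if_pos hiA]

lemma xt_posB (m : ℕ) (A B : Finset ℕ) (i : ℕ) (hi : 1 ≤ i) (hiB : i ∈ B)
    (j : Fin (2*m+1)) (hj : (j:ℕ) = 2*i) : xt m A B j = 2*i - 1 := by
  have h1 : (j:ℕ) + 1 = 2*i+1 := by omega
  simp only [xt, h1]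
  rw [if_neg (by omega), if_neg (by omega : ¬ (2*i+1) % 2 = 0),
    show (2*i+1-1)/2 = i by omega, if_pos hiB]
  omega

lemma xt_zero (m : ℕ) (A B : Finset ℕ) (j : Fin (2*m+1)) (hj : (j:ℕ) = 0) :
    xt m A B j = 0 := by
  simp [xt, hj]

lemma xt_cases (m : ℕ) (A B : Finset ℕ) (j : Fin (2*m+1)) :
    xt m A B j = 0 ∨
    (∃ i, 1 ≤ i ∧ i ∈ A ∧ (j:ℕ) = 2*i - 1 ∧ xt m A B j = 2*i) ∨
    (∃ i, 1 ≤ i ∧ i ∈ B ∧ (j:ℕ) = 2*i ∧ xt m A B j = 2*i - 1) := by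
  by_cases h1 : (j:ℕ) + 1 = 1
  · left; exact xt_zero m A B j (by omega)
  by_cases h2 : ((j:ℕ)+1) % 2 = 0
  · by_cases h3 : ((j:ℕ)+1)/2 ∈ A
    · right; left
      exact ⟨((j:ℕ)+1)/2, by omega, h3, by omega,
        xt_posA m A B _ (by omega) h3 j (by omega)⟩
    · left
      simp only [xt]
      rw [if_neg h1, if_pos h2, if_neg h3]
  · by_cases h3 : (((j:ℕ)+1)-1)/2 ∈ B
    · right; right
      have he : (((j:ℕ)+1)-1)/2 = ((j:ℕ)+1)/2 := by omega
      rw [he] at h3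
      exact ⟨((j:ℕ)+1)/2, by omega, h3, by omega,
        xt_posB m A B _ (by omega) h3 j (by omega)⟩
    · left
      simp only [xt]
      rw [if_neg h1, if_neg h2, if_neg h3]

/-- Reduction from set-disjointness (proof of Theorem 1.6): for `k`-subsets
`A, B ⊆ {1,…,m}`, `lis(x̃) = 2k+1` if `A ∩ B = ∅`, and `lis(x̃) ≤ 2k`
otherwise. -/
theorem stmt8 (m k : ℕ) (hm : 1 ≤ m) (A B : Finset ℕ)
    (hA : A ⊆ Finset.Icc 1 m) (hB : B ⊆ Finset.Icc 1 m)
    (hAk : A.card = k) (hBk : B.card = k) :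
    (A ∩ B = ∅ → lis (xt m A B) = 2 * k + 1) ∧
    (A ∩ B ≠ ∅ → lis (xt m A B) ≤ 2 * k) := by
  -- upper bound: lis ≤ |A ∪ B| + 1
  have hub : lis (xt m A B) ≤ (A ∪ B).card + 1 := by
    unfold lis
    apply Finset.sup_le
    intro T hT
    rw [Finset.mem_filter] at hT
    have hinc := hT.2
    have key : ∀ a b : Fin (2*m+1), a ∈ T → b ∈ T → a < b →
        (if xt m A B a = 0 then 0 else ((a:ℕ)+1)/2)
          = (if xt m A B b = 0 then 0 else ((b:ℕ)+1)/2) → False := by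
      intro a b ha hb hab hfab
      have hab' : (a:ℕ) < (b:ℕ) := hab
      have hv := hinc a ha b hb hab
      have hzb : xt m A B b ≠ 0 := by omega
      rw [if_neg hzb] at hfab
      rcases xt_cases m A B b with hb0 | ⟨i, hi1, hiA, hbe, hbv⟩ |
          ⟨i, hi1, hiB, hbe, hbv⟩
      · exact hzb hb0
      all_goals {
        by_cases hza : xt m A B a = 0
        · rw [if_pos hza] at hfab; omega
        · rw [if_neg hza] at hfab
          rcases xt_cases m A B a with ha0 | ⟨i', hi1', hiA', hae, hav⟩ |
              ⟨i', hi1', hiB', hae, hav⟩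
          · exact hza ha0
          all_goals omega }
    have hmaps : ∀ a ∈ T, (if xt m A B a = 0 then 0 else ((a:ℕ)+1)/2)
        ∈ insert 0 (A ∪ B) := by
      intro a _
      by_cases hza : xt m A B a = 0
      · rw [if_pos hza]; exact Finset.mem_insert_self 0 _
      · rw [if_neg hza]
        rcases xt_cases m A B a with ha0 | ⟨i, hi1, hiA', hae, hav⟩ |
            ⟨i, hi1, hiB', hae, hav⟩
        · exact absurd ha0 hza
        · rw [show ((a:ℕ)+1)/2 = i by omega]
          exact Finset.mem_insert_of_mem (Finset.mem_union_left _ hiA')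
        · rw [show ((a:ℕ)+1)/2 = i by omega]
          exact Finset.mem_insert_of_mem (Finset.mem_union_right _ hiB')
    have hcard : T.card ≤ (insert 0 (A ∪ B)).card := by
      apply Finset.card_le_card_of_injOn _ hmaps
      intro a ha b hb hfab
      by_contra hne
      rcases Ne.lt_or_gt hne with h | h
      · exact key a b ha hb h hfab
      · exact key b a hb ha h hfab.symm
    calc T.card ≤ (insert 0 (A ∪ B)).card := hcard
      _ ≤ (A ∪ B).card + 1 := Finset.card_insert_le _ _
  constructor
  · -- disjoint case
    intro hAB
    have hdisj : Disjoint A B := Finset.disjoint_iff_inter_eq_empty.2 hAB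
    have hcardU : (A ∪ B).card = 2 * k := by
      rw [Finset.card_union_of_disjoint hdisj]; omega
    -- lower bound: construct the witness set
    set S : Finset ℕ :=
      insert 0 ((A.image fun i => 2*i - 1) ∪ (B.image fun i => 2*i)) with hS
    have hbound : ∀ n ∈ S, n < 2*m+1 := by
      intro n hn
      simp only [hS, Finset.mem_insert, Finset.mem_union, Finset.mem_image] at hn
      rcases hn with rfl | ⟨i, hi, rfl⟩ | ⟨i, hi, rfl⟩
      · omega
      · have := hA hi; rw [Finset.mem_Icc] at this; omega
      · have := hB hi; rw [Finset.mem_Icc] at this; omega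
    have hmemS : ∀ a : Fin (2*m+1), (a:ℕ) ∈ S →
        (a:ℕ) = 0 ∨ (∃ i, 1 ≤ i ∧ i ∈ A ∧ (a:ℕ) = 2*i-1) ∨
        (∃ i, 1 ≤ i ∧ i ∈ B ∧ (a:ℕ) = 2*i) := by
      intro a haS
      simp only [hS, Finset.mem_insert, Finset.mem_union, Finset.mem_image] at haS
      rcases haS with h | ⟨i, hi, he⟩ | ⟨i, hi, he⟩
      · exact Or.inl h
      · have := hA hi; rw [Finset.mem_Icc] at this
        exact Or.inr (Or.inl ⟨i, by omega, hi, he.symm⟩)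
      · have := hB hi; rw [Finset.mem_Icc] at this
        exact Or.inr (Or.inr ⟨i, by omega, hi, he.symm⟩)
    have hTmem : S.attachFin hbound ∈ Finset.univ.filter
        (fun T : Finset (Fin (2*m+1)) =>
          ∀ i ∈ T, ∀ j ∈ T, i < j → xt m A B i < xt m A B j) := by
      rw [Finset.mem_filter]
      refine ⟨Finset.mem_univ _, ?_⟩
      intro a ha b hb hab
      have hab' : (a:ℕ) < (b:ℕ) := hab
      rw [Finset.mem_attachFin] at ha hb
      rcases hmemS a ha with ha0 | ⟨i', hi1', hiA', hae⟩ | ⟨i', hi1', hiB', hae⟩ <;>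
        rcases hmemS b hb with hb0 | ⟨i, hi1, hiA'', hbe⟩ | ⟨i, hi1, hiB'', hbe⟩
      · omega
      · rw [xt_zero m A B a ha0, xt_posA m A B i hi1 hiA'' b hbe]; omega
      · rw [xt_zero m A B a ha0, xt_posB m A B i hi1 hiB'' b hbe]; omega
      · omega
      · rw [xt_posA m A B i' hi1' hiA' a hae, xt_posA m A B i hi1 hiA'' b hbe]
        omega
      · rw [xt_posA m A B i' hi1' hiA' a hae, xt_posB m A B i hi1 hiB'' b hbe]
        have hne : i' ≠ i := by
          intro h; subst h
          exact absurd (Finset.mem_inter.2 ⟨hiA', hiB''⟩)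
            (by rw [hAB]; exact Finset.notMem_empty _)
        omega
      · omega
      · rw [xt_posB m A B i' hi1' hiB' a hae, xt_posA m A B i hi1 hiA'' b hbe]
        omega
      · rw [xt_posB m A B i' hi1' hiB' a hae, xt_posB m A B i hi1 hiB'' b hbe]
        omega
    have hcardS : S.card = 2 * k + 1 := by
      have h0 : (0:ℕ) ∉ (A.image fun i => 2*i - 1) ∪ (B.image fun i => 2*i) := by
        simp only [Finset.mem_union, Finset.mem_image, not_or]
        constructor
        · rintro ⟨i, hi, he⟩
          have := hA hi; rw [Finset.mem_Icc] at this; omega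
        · rintro ⟨i, hi, he⟩
          have := hB hi; rw [Finset.mem_Icc] at this; omega
      have hdisjI : Disjoint (A.image fun i => 2*i - 1) (B.image fun i => 2*i) := by
        rw [Finset.disjoint_left]
        rintro x hx hy
        simp only [Finset.mem_image] at hx hy
        obtain ⟨i, hi, he⟩ := hx
        obtain ⟨i', hi', he'⟩ := hy
        have h1 := hA hi; have h2 := hB hi'
        rw [Finset.mem_Icc] at h1 h2; omega
      have hcA : (A.image fun i => 2*i - 1).card = k := by
        rw [Finset.card_image_of_injOn, hAk]
        intro x hx y hy hxy
        have h1 := hA hx; have h2 := hA hy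
        rw [Finset.mem_Icc] at h1 h2
        simp only at hxy; omega
      have hcB : (B.image fun i => 2*i).card = k := by
        rw [Finset.card_image_of_injOn, hBk]
        intro x hx y hy hxy
        simp only at hxy; omega
      rw [hS, Finset.card_insert_of_notMem h0,
        Finset.card_union_of_disjoint hdisjI, hcA, hcB]
      omega
    have hlow : 2 * k + 1 ≤ lis (xt m A B) := by
      unfold lis
      have := Finset.le_sup (f := Finset.card) hTmem
      rwa [Finset.card_attachFin, hcardS] at this
    omega
  · intro hAB
    have hne : (A ∩ B).Nonempty := Finset.nonempty_iff_ne_empty.2 hAB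
    have h1 : 1 ≤ (A ∩ B).card := Finset.card_pos.2 hne
    have h2 : (A ∪ B).card + (A ∩ B).card = A.card + B.card :=
      Finset.card_union_add_card_inter A B
    omega
end

section
/- Let n be even, let π be a permutation of {1, …, n}, and let A = {π(i) : 1 ≤ i ≤ n/2} be the set of values appearing in the first n/2 positions of π. If g(A) ≥ m + 1, then π is a type 1 order with parameter m. -/
/-- `π` (a permutation of `{1,…,n}`, with both positions and values represented
`0`-indexed by `Fin n`) is a type 1 order with parameter `m`: there are stream
positions `i_1,…,i_m` and `j_1,…,j_m` with `max I < min J` such that the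
original (`1`-indexed) indices interleave as
`1 ≤ π(i_1) < π(j_1) < π(i_2) < ⋯ < π(i_m) < π(j_m) < n`. -/
def IsType1Order {n : ℕ} (π : Equiv.Perm (Fin n)) (m : ℕ) : Prop :=
  ∃ i j : Fin m → Fin n,
    (∀ k l : Fin m, i k < j l) ∧
    (∀ k : Fin m, π (i k) < π (j k)) ∧
    (∀ k l : Fin m, k < l → π (j k) < π (i l)) ∧
    (∀ k : Fin m, ((π (j k) : ℕ) + 1) < n)

/-- `gInt A` is the minimum number of intervals of consecutive integers whose
union is `A`. -/
noncomputable def gInt (A : Finset ℕ) : ℕ :=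
  sInf {k | ∃ I : Fin k → ℕ × ℕ,
    A = Finset.univ.biUnion fun t => Finset.Ico (I t).1 (I t).2}

lemma cover_exists (A : Finset ℕ) :
    ∃ k, ∃ I : Fin k → ℕ × ℕ,
      A = Finset.univ.biUnion fun t => Finset.Ico (I t).1 (I t).2 := by
  refine ⟨A.card, fun t => ((A.equivFin.symm t : ℕ), (A.equivFin.symm t : ℕ) + 1), ?_⟩
  ext x
  simp only [Finset.mem_biUnion, Finset.mem_univ, Finset.mem_Ico, true_and]
  constructor
  · intro hx
    exact ⟨A.equivFin ⟨x, hx⟩, by simp, by simp⟩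
  · rintro ⟨t, h1, h2⟩
    have : x = (A.equivFin.symm t : ℕ) := by omega
    rw [this]
    exact (A.equivFin.symm t).2

lemma gInt_le (A : Finset ℕ) (k : ℕ) (I : Fin k → ℕ × ℕ)
    (h : A = Finset.univ.biUnion fun t => Finset.Ico (I t).1 (I t).2) :
    gInt A ≤ k :=
  Nat.sInf_le ⟨I, h⟩

lemma gInt_spec (A : Finset ℕ) :
    ∃ I : Fin (gInt A) → ℕ × ℕ,
      A = Finset.univ.biUnion fun t => Finset.Ico (I t).1 (I t).2 := by
  have h : {k | ∃ I : Fin k → ℕ × ℕ,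
      A = Finset.univ.biUnion fun t => Finset.Ico (I t).1 (I t).2}.Nonempty := by
    obtain ⟨k, I, hI⟩ := cover_exists A
    exact ⟨k, I, hI⟩
  exact Nat.sInf_mem h

lemma nonempty_of_gInt (A : Finset ℕ) (h : 1 ≤ gInt A) : A.Nonempty := by
  by_contra hA
  rw [Finset.not_nonempty_iff_eq_empty] at hA
  have : gInt A ≤ 0 := by
    apply gInt_le A 0 Fin.elim0
    simp [hA]
  omega

/-- Key combinatorial lemma: if `A` needs more than `m` intervals, there is an
interleaving `a 0 < b 0 < a 1 < … < b (m-1) < a m` with `a` in `A`, `b` outside. -/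
lemma key_interleave : ∀ (m : ℕ) (A : Finset ℕ), m + 1 ≤ gInt A →
    ∃ (a : Fin (m + 1) → ℕ) (b : Fin m → ℕ),
      (∀ k, a k ∈ A) ∧ (∀ k, b k ∉ A) ∧
      (∀ k : Fin m, a k.castSucc < b k) ∧ (∀ k : Fin m, b k < a k.succ) := by
  intro m
  induction m with
  | zero =>
    intro A h
    have hA : A.Nonempty := nonempty_of_gInt A h
    exact ⟨fun _ => A.min' hA, Fin.elim0, fun _ => A.min'_mem hA,
      fun k => k.elim0, fun k => k.elim0, fun k => k.elim0⟩
  | succ m ih =>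
    intro A h
    have hA : A.Nonempty := nonempty_of_gInt A (by omega)
    set a₀ := A.min' hA with ha₀
    set G := (Finset.range (A.max' hA)).filter (fun x => a₀ ≤ x ∧ x ∉ A) with hG
    have hGne : G.Nonempty := by
      by_contra hGe
      rw [Finset.not_nonempty_iff_eq_empty] at hGe
      -- then A is one interval
      have hcov : A = Finset.univ.biUnion
          (fun t : Fin 1 => Finset.Ico ((fun _ => (a₀, A.max' hA + 1)) t).1
            ((fun _ => (a₀, A.max' hA + 1)) t).2) := by
        ext x
        simp only [Finset.mem_biUnion, Finset.mem_univ, Finset.mem_Ico, true_and]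
        constructor
        · intro hx
          exact ⟨0, A.min'_le x hx, Nat.lt_succ_of_le (A.le_max' x hx)⟩
        · rintro ⟨t, h1, h2⟩
          by_contra hx
          rcases Nat.lt_or_ge x (A.max' hA) with hlt | hge
          · have : x ∈ G := by
              rw [hG]
              simp only [Finset.mem_filter, Finset.mem_range]
              exact ⟨hlt, h1, hx⟩
            rw [hGe] at this
            simp at this
          · have : x = A.max' hA := by omega
            rw [this] at hx
            exact hx (A.max'_mem hA)
      have := gInt_le A 1 _ hcov
      omega
    set b₀ := G.min' hGne with hb₀
    have hb₀G : b₀ ∈ G := G.min'_mem hGne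
    have hb₀' : a₀ ≤ b₀ ∧ b₀ ∉ A ∧ b₀ < A.max' hA := by
      have := hb₀G
      rw [hG] at this
      simp only [Finset.mem_filter, Finset.mem_range] at this
      tauto
    set A' := A.filter (fun x => b₀ < x) with hA'
    -- the initial segment is an interval
    have hIco : ∀ x, a₀ ≤ x → x < b₀ → x ∈ A := by
      intro x h1 h2
      by_contra hx
      have : x ∈ G := by
        rw [hG]
        simp only [Finset.mem_filter, Finset.mem_range]
        exact ⟨by omega, h1, hx⟩
      have := G.min'_le x this
      omega
    have hsplit : A = Finset.Ico a₀ b₀ ∪ A' := by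
      ext x
      simp only [Finset.mem_union, Finset.mem_Ico, hA', Finset.mem_filter]
      constructor
      · intro hx
        rcases Nat.lt_or_ge x b₀ with hlt | hge
        · exact Or.inl ⟨A.min'_le x hx, hlt⟩
        · have : x ≠ b₀ := by rintro rfl; exact hb₀'.2.1 hx
          exact Or.inr ⟨hx, by omega⟩
      · rintro (⟨h1, h2⟩ | ⟨h1, _⟩)
        · exact hIco x h1 h2
        · exact h1
    have hstep : gInt A ≤ gInt A' + 1 := by
      obtain ⟨I, hI⟩ := gInt_spec A'
      apply gInt_le A (gInt A' + 1) (Fin.cons (a₀, b₀) I)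
      have hmem' : ∀ x, x ∈ A' ↔ ∃ t : Fin (gInt A'), x ∈ Finset.Ico (I t).1 (I t).2 := by
        intro x; simpa using Finset.ext_iff.mp hI x
      rw [hsplit]
      ext x
      simp only [Finset.mem_union, Finset.mem_biUnion, Finset.mem_univ, true_and, hmem' x]
      constructor
      · rintro (hx | ⟨t, ht⟩)
        · exact ⟨0, by simpa using hx⟩
        · exact ⟨t.succ, by simpa using ht⟩
      · rintro ⟨t, ht⟩
        rcases Fin.eq_zero_or_eq_succ t with rfl | ⟨s, rfl⟩
        · exact Or.inl (by simpa using ht)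
        · exact Or.inr ⟨s, by simpa using ht⟩
    have h' : m + 1 ≤ gInt A' := by omega
    obtain ⟨a', b', ha', hb', hab', hba'⟩ := ih A' h'
    have ha'A : ∀ k, a' k ∈ A ∧ b₀ < a' k := by
      intro k
      have := ha' k
      rw [hA', Finset.mem_filter] at this
      exact this
    refine ⟨Fin.cons a₀ a', Fin.cons b₀ b', ?_, ?_, ?_, ?_⟩
    · intro k
      rcases Fin.eq_zero_or_eq_succ k with rfl | ⟨s, rfl⟩
      · simpa using A.min'_mem hA
      · simpa using (ha'A s).1
    · intro k
      rcases Fin.eq_zero_or_eq_succ k with rfl | ⟨s, rfl⟩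
      · simpa using hb₀'.2.1
      · simp only [Fin.cons_succ]
        intro hmem
        apply hb' s
        rw [hA', Finset.mem_filter]
        refine ⟨hmem, ?_⟩
        have h1 := hab' s
        have h2 := (ha'A s.castSucc).2
        omega
    · intro k
      rcases Fin.eq_zero_or_eq_succ k with rfl | ⟨s, rfl⟩
      · have h1 := hb₀'.1
        have h2 : a₀ ≠ b₀ := fun he => hb₀'.2.1 (he ▸ A.min'_mem hA)
        simp only [Fin.castSucc_zero, Fin.cons_zero]
        omega
      · have : (s.succ).castSucc = (s.castSucc).succ := (Fin.succ_castSucc s).symm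
        rw [this]
        simpa using hab' s
    · intro k
      rcases Fin.eq_zero_or_eq_succ k with rfl | ⟨s, rfl⟩
      · simpa using (ha'A 0).2
      · simpa using hba' s

/-- Combinatorial step in the proof of Claim 4.2: if the set `A` of values
(`1`-indexed) appearing in the first `n/2` positions of `π` satisfies
`g(A) ≥ m + 1`, then `π` is a type 1 order with parameter `m`. -/
theorem stmt9 (n m : ℕ) (hn : 2 ∣ n) (π : Equiv.Perm (Fin n))
    (h : m + 1 ≤ gInt (Finset.image
      (fun i : Fin (n / 2) => ((π ⟨(i : ℕ), by have := i.isLt; omega⟩ : Fin n) : ℕ) + 1)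
      Finset.univ)) :
    IsType1Order π m := by
  set A := (Finset.image
      (fun i : Fin (n / 2) => ((π ⟨(i : ℕ), by have := i.isLt; omega⟩ : Fin n) : ℕ) + 1)
      Finset.univ) with hAdef
  have hmemA : ∀ x, x ∈ A ↔ ∃ i : Fin (n / 2),
      ((π ⟨(i : ℕ), by have := i.isLt; omega⟩ : Fin n) : ℕ) + 1 = x := by
    intro x
    rw [hAdef]
    simp [Finset.mem_image]
  have hAbd : ∀ x ∈ A, 1 ≤ x ∧ x ≤ n := by
    intro x hx
    obtain ⟨i, hi⟩ := (hmemA x).1 hx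
    have := (π ⟨(i : ℕ), by have := i.isLt; omega⟩).isLt
    omega
  obtain ⟨a, b, ha, hb, hab, hba⟩ := key_interleave m A h
  have hamono : StrictMono a := by
    rw [Fin.strictMono_iff_lt_succ]
    intro k
    exact lt_trans (hab k) (hba k)
  have hbltn : ∀ k : Fin m, b k < n := fun k =>
    lt_of_lt_of_le (hba k) (hAbd _ (ha k.succ)).2
  have hbpos : ∀ k : Fin m, 1 ≤ b k := fun k =>
    le_trans (hAbd _ (ha k.castSucc)).1 (le_of_lt (hab k))
  have hapos : ∀ k, 1 ≤ a k ∧ a k ≤ n := fun k => hAbd _ (ha k)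
  have hn1 : 1 ≤ n := by
    have := hapos 0
    omega
  set I : Fin m → Fin n := fun k =>
    π.symm ⟨a k.castSucc - 1, by have := hapos k.castSucc; omega⟩ with hI
  set J : Fin m → Fin n := fun k =>
    π.symm ⟨b k - 1, by have := hbltn k; omega⟩ with hJ
  have hπI : ∀ k, (π (I k) : ℕ) = a k.castSucc - 1 := by
    intro k
    rw [hI]
    simp
  have hπJ : ∀ k, (π (J k) : ℕ) = b k - 1 := by
    intro k
    rw [hJ]
    simp
  have hIlt : ∀ k, (I k : ℕ) < n / 2 := by
    intro k
    obtain ⟨i, hi⟩ := (hmemA _).1 (ha k.castSucc)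
    have : I k = ⟨(i : ℕ), by have := i.isLt; omega⟩ := by
      rw [hI]
      apply π.symm_apply_eq.2
      apply Fin.ext
      simp
      omega
    rw [this]
    exact i.isLt
  have hJge : ∀ k, n / 2 ≤ (J k : ℕ) := by
    intro k
    by_contra hlt
    push_neg at hlt
    apply hb k
    rw [hmemA]
    refine ⟨⟨(J k : ℕ), hlt⟩, ?_⟩
    have : (⟨((J k : Fin n) : ℕ), (J k).isLt⟩ : Fin n) = J k := by
      apply Fin.ext; rfl
    have h2 : π ⟨(J k : ℕ), (J k).isLt⟩ = π (J k) := by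
      congr 1
    rw [h2, hπJ k]
    have := hbpos k
    omega
  refine ⟨I, J, ?_, ?_, ?_, ?_⟩
  · intro k l
    have h1 := hIlt k
    have h2 := hJge l
    rw [Fin.lt_def]
    omega
  · intro k
    rw [Fin.lt_def, hπI, hπJ]
    have h1 := hab k
    have h2 := hapos k.castSucc
    omega
  · intro k l hkl
    rw [Fin.lt_def, hπI, hπJ]
    have h1 : a k.succ ≤ a l.castSucc := by
      apply hamono.monotone
      rw [Fin.le_def]
      simp only [Fin.val_succ, Fin.coe_castSucc]
      exact hkl
    have h2 := hba k
    have h3 := hbpos k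
    omega
  · intro k
    rw [hπJ]
    have h1 := hbltn k
    have h2 := hbpos k
    omega
end

section
/- There exists N such that for every n ≥ N divisible by 32, the number of permutations π of {1, …, n} that are not type 1 orders with parameter n/32 is at most 2^{−n/32} · n!. Equivalently, a permutation of {1, …, n} chosen uniformly at random is a type 1 order with parameter n/32 with probability at least 1 − 2^{−n/32}. -/
namespace Stmt11

open Finset

variable {n : ℕ}

/-- extension of a word to all of `ℕ` -/
def ext (w : Fin n → Bool) (i : ℕ) : Bool :=
  if h : i < n then w ⟨i, h⟩ else false

lemma ext_eq (w : Fin n → Bool) (i : ℕ) (h : i < n) : ext w i = w ⟨i, h⟩ := dif_pos h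

/-- the set of descents (alternation points) of a word -/
def descSet (w : Fin n → Bool) : Finset (Fin (n - 1)) :=
  Finset.univ.filter (fun i => ext w i ≠ ext w ((i : ℕ) + 1))

/-- a word contains `(FL)^k` (with the final-letter constraint) -/
def HasPat (w : Fin n → Bool) (k : ℕ) : Prop :=
  ∃ a b : Fin k → Fin n,
    (∀ t, w (a t) = true) ∧ (∀ t, w (b t) = false) ∧
    (∀ t, a t < b t) ∧ (∀ s t, s < t → b s < a t) ∧ (∀ t, (b t : ℕ) + 1 < n)

/-- a word contains `(FL)^k` (no final-letter constraint) -/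
def HasPat' (w : Fin n → Bool) (k : ℕ) : Prop :=
  ∃ a b : Fin k → Fin n,
    (∀ t, w (a t) = true) ∧ (∀ t, w (b t) = false) ∧
    (∀ t, a t < b t) ∧ (∀ s t, s < t → b s < a t)

lemma hasPat_of_hasPat' (w : Fin n → Bool) (k : ℕ) (h : HasPat' w (k + 1)) :
    HasPat w k := by
  obtain ⟨a, b, ha, hb, hab, hba⟩ := h
  refine ⟨fun t => a t.castSucc, fun t => b t.castSucc, fun t => ha _, fun t => hb _,
    fun t => hab _, fun s t hst => hba _ _ (by simpa using hst), fun t => ?_⟩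
  show ((b t.castSucc : ℕ) + 1) < n
  have h1 : b t.castSucc < a (Fin.last k) := hba _ _ (Fin.castSucc_lt_last t)
  have h2 : a (Fin.last k) < b (Fin.last k) := hab _
  have h3 : (b (Fin.last k) : ℕ) < n := (b (Fin.last k)).isLt
  have h1' : (b t.castSucc : ℕ) < (a (Fin.last k) : ℕ) := h1
  have h2' : (a (Fin.last k) : ℕ) < (b (Fin.last k) : ℕ) := h2
  omega

lemma word_const_between (w : Fin n → Bool) (a b : ℕ) (hab : a ≤ b) (hb : b ≤ n - 1)
    (hfree : ∀ x (hx : x < n - 1), a ≤ x → x < b → (⟨x, hx⟩ : Fin (n - 1)) ∉ descSet w) :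
    ext w a = ext w b := by
  induction b, hab using Nat.le_induction with
  | base => rfl
  | succ b hab ih =>
    have hb' : b < n - 1 := by omega
    have h1 : ext w a = ext w b := ih (by omega) (fun x hx h1 h2 => hfree x hx h1 (by omega))
    have h2 : (⟨b, hb'⟩ : Fin (n - 1)) ∉ descSet w := hfree b hb' hab (by omega)
    simp only [descSet, mem_filter, mem_univ, true_and, not_not] at h2
    rw [h1]
    exact h2

lemma word_eq_of_encode_eq (w w' : Fin n → Bool) (h0 : ext w 0 = ext w' 0)
    (hD : descSet w = descSet w') : w = w' := by
  have main : ∀ i : ℕ, ext w i = ext w' i := by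
    intro i
    induction i with
    | zero => exact h0
    | succ i ih =>
      by_cases hi : i + 1 < n
      · have hi' : i < n - 1 := by omega
        have hiff := Finset.ext_iff.mp hD ⟨i, hi'⟩
        simp only [descSet, mem_filter, mem_univ, true_and] at hiff
        cases hx : ext w i <;> cases hy : ext w (i + 1) <;> cases hz : ext w' (i + 1) <;>
          simp_all
      · simp [ext, hi]
  funext v
  have := main v.val
  simpa [ext_eq w _ v.isLt, ext_eq w' _ v.isLt] using this

lemma hasPat'_of_card_descSet (w : Fin n → Bool) (k : ℕ) (hk : 1 ≤ k)
    (h : 2 * k ≤ (descSet w).card) : HasPat' w k := by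
  classical
  set D := descSet w with hDdef
  set c := D.card with hcdef
  have hc : 0 < c := by omega
  have hn1 : 0 < n - 1 := by
    obtain ⟨x, hx⟩ := Finset.card_pos.mp hc
    exact x.pos
  let e := D.orderIsoOfFin rfl
  let p : Fin c → ℕ := fun i => ((e i : Fin (n - 1)) : ℕ)
  have hpmono : StrictMono p := by
    intro i j hij
    have h1 : e i < e j := e.lt_iff_lt.mpr hij
    exact_mod_cast h1
  have hplt : ∀ i, p i < n - 1 := fun i => (e i : Fin (n - 1)).isLt
  have hpmem : ∀ i, ((e i : Fin (n - 1)) : Fin (n - 1)) ∈ D := fun i => (e i).2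
  let q : ℕ → ℕ := fun i => if hqi : i < c then p ⟨i, hqi⟩ else p ⟨c - 1, by omega⟩ + 1
  have hq_lt : ∀ i, q i < n := by
    intro i
    by_cases hi : i < c
    · simp only [q, dif_pos hi]
      have := hplt ⟨i, hi⟩
      omega
    · simp only [q, dif_neg hi]
      have := hplt ⟨c - 1, by omega⟩
      omega
  have hq_mono : ∀ i j, i < j → j ≤ c → q i < q j := by
    intro i j hij hj
    by_cases hjc : j < c
    · have hic : i < c := by omega
      simp only [q, dif_pos hic, dif_pos hjc]
      exact hpmono (by exact Fin.mk_lt_mk.mpr hij)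
    · have hjeq : j = c := by omega
      have hic : i < c := by omega
      simp only [q, dif_pos hic, dif_neg (by omega : ¬ j < c)]
      have : p ⟨i, hic⟩ ≤ p ⟨c - 1, by omega⟩ :=
        hpmono.monotone (Fin.mk_le_mk.mpr (by omega))
      omega
  -- descent fact at each sorted descent position
  have hdesc : ∀ i (hi : i < c), ext w (p ⟨i, hi⟩ + 1) = ! ext w (p ⟨i, hi⟩) := by
    intro i hi
    have hmem : ((e ⟨i, hi⟩ : Fin (n - 1)) : Fin (n - 1)) ∈ descSet w := hpmem ⟨i, hi⟩
    simp only [descSet, mem_filter, mem_univ, true_and] at hmem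
    cases hx : ext w ((e ⟨i, hi⟩ : Fin (n - 1)) : ℕ) <;>
      cases hy : ext w (((e ⟨i, hi⟩ : Fin (n - 1)) : ℕ) + 1) <;> simp_all [p]
  have hstep : ∀ i, i + 1 ≤ c → ext w (q (i + 1)) = ! ext w (q i) := by
    intro i hi1
    have hic : i < c := by omega
    have hqi : q i = p ⟨i, hic⟩ := dif_pos hic
    by_cases hi1c : i + 1 < c
    · have hq1 : q (i + 1) = p ⟨i + 1, hi1c⟩ := dif_pos hi1c
      have hconst : ext w (p ⟨i, hic⟩ + 1) = ext w (p ⟨i + 1, hi1c⟩) := by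
        apply word_const_between w _ _ (hpmono (Fin.mk_lt_mk.mpr (by omega)))
          (le_of_lt (hplt ⟨i + 1, hi1c⟩))
        intro x hx h1 h2 hmem
        have hmem' : (⟨x, hx⟩ : Fin (n - 1)) ∈ D := by rwa [hDdef]
        set s : Fin c := e.symm ⟨⟨x, hx⟩, hmem'⟩ with hs
        have hes : e s = ⟨⟨x, hx⟩, hmem'⟩ := e.apply_symm_apply _
        have hps : p s = x := by simp [p, hes]
        have hlt1 : p ⟨i, hic⟩ < p s := by omega
        have hlt2 : p s < p ⟨i + 1, hi1c⟩ := by omega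
        have hs1 : (⟨i, hic⟩ : Fin c) < s := hpmono.lt_iff_lt.mp hlt1
        have hs2 : s < (⟨i + 1, hi1c⟩ : Fin c) := hpmono.lt_iff_lt.mp hlt2
        have hv1 := Fin.lt_iff_val_lt_val.mp hs1
        have hv2 := Fin.lt_iff_val_lt_val.mp hs2
        have e1 : ((⟨i, hic⟩ : Fin c) : ℕ) = i := rfl
        have e2 : ((⟨i + 1, hi1c⟩ : Fin c) : ℕ) = i + 1 := rfl
        omega
      rw [hq1, hqi, ← hconst, hdesc i hic]
    · have hi1eq : i + 1 = c := by omega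
      have hq1 : q (i + 1) = p ⟨c - 1, by omega⟩ + 1 := dif_neg (by omega)
      have hceq : (⟨c - 1, by omega⟩ : Fin c) = ⟨i, hic⟩ := by
        ext; simp; omega
      rw [hq1, hceq, hqi, hdesc i hic]
  have hparity : ∀ i, i ≤ c →
      ext w (q i) = (if i % 2 = 0 then ext w (q 0) else ! ext w (q 0)) := by
    intro i
    induction i with
    | zero => intro _; simp
    | succ i ih =>
      intro hi
      rw [hstep i hi, ih (by omega)]
      rcases Nat.even_or_odd i with hpar | hpar
      · have h1 : i % 2 = 0 := Nat.even_iff.mp hpar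
        have h2 : (i + 1) % 2 ≠ 0 := by omega
        simp [h1, h2]
      · have h1 : i % 2 ≠ 0 := by
          have := Nat.odd_iff.mp hpar; omega
        have h2 : (i + 1) % 2 = 0 := by
          have := Nat.odd_iff.mp hpar; omega
        simp [h1, h2]
  have hwq : ∀ i (hi : i < n), w ⟨i, hi⟩ = ext w i := fun i hi => (ext_eq w i hi).symm
  by_cases hs : ext w (q 0) = true
  · refine ⟨fun t => ⟨q (2 * t), hq_lt _⟩, fun t => ⟨q (2 * t + 1), hq_lt _⟩,
      ?_, ?_, ?_, ?_⟩
    · intro t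
      rw [hwq, hparity (2 * t) (by omega), if_pos (by omega), hs]
    · intro t
      have ht : (t : ℕ) < k := t.isLt
      rw [hwq, hparity (2 * t + 1) (by omega), if_neg (by omega), hs]
      rfl
    · intro t
      have ht : (t : ℕ) < k := t.isLt
      exact Fin.mk_lt_mk.mpr (hq_mono _ _ (by omega) (by omega))
    · intro s t hst
      have hst' : (s : ℕ) < (t : ℕ) := hst
      have ht : (t : ℕ) < k := t.isLt
      exact Fin.mk_lt_mk.mpr (hq_mono _ _ (by omega) (by omega))
  · have hs' : ext w (q 0) = false := by
      cases hx : ext w (q 0)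
      · rfl
      · exact absurd hx hs
    refine ⟨fun t => ⟨q (2 * t + 1), hq_lt _⟩, fun t => ⟨q (2 * t + 2), hq_lt _⟩,
      ?_, ?_, ?_, ?_⟩
    · intro t
      have ht : (t : ℕ) < k := t.isLt
      rw [hwq, hparity (2 * t + 1) (by omega), if_neg (by omega), hs']
      rfl
    · intro t
      have ht : (t : ℕ) < k := t.isLt
      rw [hwq, hparity (2 * t + 2) (by omega), if_pos (by omega), hs']
    · intro t
      have ht : (t : ℕ) < k := t.isLt
      exact Fin.mk_lt_mk.mpr (hq_mono _ _ (by omega) (by omega))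
    · intro s t hst
      have hst' : (s : ℕ) < (t : ℕ) := hst
      have ht : (t : ℕ) < k := t.isLt
      exact Fin.mk_lt_mk.mpr (hq_mono _ _ (by omega) (by omega))

/-- the word of a permutation: for each value, whether its position is
in the first half of the stream -/
def word (m : ℕ) (π : Equiv.Perm (Fin (32 * m))) : Fin (32 * m) → Bool :=
  fun v => decide ((π.symm v : ℕ) < 16 * m)

lemma isType1Order_of_hasPat {m : ℕ} (π : Equiv.Perm (Fin (32 * m)))
    (h : HasPat (word m π) m) : IsType1Order π m := by
  obtain ⟨a, b, ha, hb, hab, hba, hbn⟩ := h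
  refine ⟨fun k => π.symm (a k), fun k => π.symm (b k), ?_, ?_, ?_, ?_⟩
  · intro k l
    have h1 : (π.symm (a k) : ℕ) < 16 * m := by
      have := ha k; simpa [word] using this
    have h2 : ¬ (π.symm (b l) : ℕ) < 16 * m := by
      have := hb l; simpa [word] using this
    show π.symm (a k) < π.symm (b l)
    exact Fin.lt_iff_val_lt_val.mpr (by omega)
  · intro k; simpa using hab k
  · intro k l hkl; simpa using hba k l hkl
  · intro k; simpa using hbn k

lemma choose_step {N j : ℕ} (h : 4 * (j + 1) ≤ N) :
    3 * N.choose j ≤ N.choose (j + 1) := by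
  have key : N.choose (j + 1) * (j + 1) = N.choose j * (N - j) := Nat.choose_succ_right_eq N j
  have h2 : 3 * (j + 1) ≤ N - j := by omega
  have h3 : 3 * N.choose j * (j + 1) ≤ N.choose (j + 1) * (j + 1) := by
    rw [key]
    calc 3 * N.choose j * (j + 1) = N.choose j * (3 * (j + 1)) := by ring
    _ ≤ N.choose j * (N - j) := Nat.mul_le_mul_left _ h2
  exact Nat.le_of_mul_le_mul_right h3 (by omega)

lemma choose_pow_three {N : ℕ} : ∀ t j, 4 * (j + t) ≤ N →
    3 ^ t * N.choose j ≤ N.choose (j + t) := by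
  intro t
  induction t with
  | zero => intro j h; simpa using le_refl _
  | succ t ih =>
    intro j h
    have h1 : 4 * (j + t) ≤ N := by omega
    calc 3 ^ (t + 1) * N.choose j = 3 * (3 ^ t * N.choose j) := by ring
    _ ≤ 3 * N.choose (j + t) := Nat.mul_le_mul_left _ (ih j h1)
    _ ≤ N.choose (j + t + 1) := choose_step (by omega)
    _ = N.choose (j + (t + 1)) := by ring_nf

lemma choose_mono_left {N j k : ℕ} (hjk : j ≤ k) (hk : 2 * k ≤ N) :
    N.choose j ≤ N.choose k := by
  induction k, hjk using Nat.le_induction with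
  | base => rfl
  | succ k hjk ih =>
    refine le_trans (ih (by omega)) (Nat.choose_le_succ_of_lt_half_left ?_)
    omega

lemma numeric (m : ℕ) (hm : 1 ≤ m) : 2 * (2 * m + 2) * 2 ^ m ≤ 3 ^ (6 * m - 1) := by
  have h1 : m + 1 ≤ 2 ^ m := Nat.lt_two_pow_self (n := m)
  have h2 : 2 * (2 * m + 2) * 2 ^ m ≤ 2 ^ (m + 2) * 2 ^ m := by
    have : 2 * (2 * m + 2) ≤ 2 ^ (m + 2) := by
      calc 2 * (2 * m + 2) = 4 * (m + 1) := by ring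
      _ ≤ 4 * 2 ^ m := by omega
      _ = 2 ^ (m + 2) := by ring
    exact Nat.mul_le_mul_right _ this
  have h3 : 2 ^ (m + 2) * 2 ^ m = 2 ^ (2 * m + 2) := by
    rw [← pow_add]; ring_nf
  have h4 : (2 : ℕ) ^ (2 * m + 2) ≤ 2 ^ (9 * m - 2) :=
    Nat.pow_le_pow_right (by omega) (by omega)
  have h5 : (2 : ℕ) ^ (9 * m - 2) ≤ 3 ^ (6 * m - 1) := by
    have ha : (2 : ℕ) ^ (9 * m) ≤ 3 ^ (6 * m) := by
      calc (2 : ℕ) ^ (9 * m) = (2 ^ 9) ^ m := by rw [← pow_mul]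
      _ ≤ (3 ^ 6) ^ m := Nat.pow_le_pow_left (by norm_num) m
      _ = 3 ^ (6 * m) := by rw [← pow_mul]
    have hb : (3 : ℕ) * 2 ^ (9 * m - 2) ≤ 3 * 3 ^ (6 * m - 1) := by
      calc (3 : ℕ) * 2 ^ (9 * m - 2) ≤ 4 * 2 ^ (9 * m - 2) := by omega
      _ = 2 ^ (9 * m - 2 + 2) := by ring
      _ = 2 ^ (9 * m) := by congr 1; omega
      _ ≤ 3 ^ (6 * m) := ha
      _ = 3 * 3 ^ (6 * m - 1) := by
          rw [← pow_succ']
          congr 1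
          omega
    exact Nat.le_of_mul_le_mul_left hb (by norm_num)
  omega

lemma count_badwords (m : ℕ) (hm : 1 ≤ m) [DecidablePred fun w : Fin (32 * m) → Bool => ¬ HasPat w m] :
    (Finset.univ.filter (fun w : Fin (32 * m) → Bool => ¬ HasPat w m)).card ≤
      2 * ((2 * m + 2) * Nat.choose (32 * m - 1) (2 * m + 1)) := by
  classical
  set badW := Finset.univ.filter (fun w : Fin (32 * m) → Bool => ¬ HasPat w m) with hbadW
  let f : (Fin (32 * m) → Bool) → Bool × Finset (Fin (32 * m - 1)) :=
    fun w => (ext w 0, descSet w)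
  set t : Finset (Bool × Finset (Fin (32 * m - 1))) :=
    Finset.univ ×ˢ (Finset.univ.filter fun S : Finset (Fin (32 * m - 1)) => S.card ≤ 2 * m + 1)
    with ht
  have hmaps : ∀ w ∈ badW, f w ∈ t := by
    intro w hw
    have hw' : ¬ HasPat w m := by simpa [hbadW] using hw
    have hcard : (descSet w).card ≤ 2 * m + 1 := by
      by_contra hgt
      push_neg at hgt
      exact hw' (hasPat_of_hasPat' w m
        (hasPat'_of_card_descSet w (m + 1) (by omega) (by omega)))
    simp [ht, f, hcard]
  have hinj : Set.InjOn f ↑badW := by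
    intro w _ w' _ hff
    exact word_eq_of_encode_eq w w' (congrArg Prod.fst hff) (congrArg Prod.snd hff)
  have h1 : badW.card ≤ t.card := Finset.card_le_card_of_injOn f hmaps hinj
  have h2 : t.card = 2 * (Finset.univ.filter
      fun S : Finset (Fin (32 * m - 1)) => S.card ≤ 2 * m + 1).card := by
    rw [ht, Finset.card_product]
    simp
  have h3 : (Finset.univ.filter
      fun S : Finset (Fin (32 * m - 1)) => S.card ≤ 2 * m + 1).card ≤
      (2 * m + 2) * Nat.choose (32 * m - 1) (2 * m + 1) := by
    have hsub : (Finset.univ.filter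
        fun S : Finset (Fin (32 * m - 1)) => S.card ≤ 2 * m + 1) ⊆
        (Finset.range (2 * m + 2)).biUnion
          (fun j => Finset.powersetCard j Finset.univ) := by
      intro S hS
      have hS' : S.card ≤ 2 * m + 1 := by simpa using hS
      refine Finset.mem_biUnion.mpr ⟨S.card, Finset.mem_range.mpr (by omega), ?_⟩
      exact Finset.mem_powersetCard.mpr ⟨Finset.subset_univ S, rfl⟩
    calc (Finset.univ.filter
        fun S : Finset (Fin (32 * m - 1)) => S.card ≤ 2 * m + 1).card
        ≤ ((Finset.range (2 * m + 2)).biUnion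
          (fun j => Finset.powersetCard j Finset.univ)).card := Finset.card_le_card hsub
      _ ≤ ∑ j ∈ Finset.range (2 * m + 2), (Finset.powersetCard j
          (Finset.univ : Finset (Fin (32 * m - 1)))).card := Finset.card_biUnion_le
      _ = ∑ j ∈ Finset.range (2 * m + 2), Nat.choose (32 * m - 1) j := by
          apply Finset.sum_congr rfl
          intro j _
          rw [Finset.card_powersetCard, Finset.card_univ, Fintype.card_fin]
      _ ≤ ∑ _j ∈ Finset.range (2 * m + 2), Nat.choose (32 * m - 1) (2 * m + 1) := by
          apply Finset.sum_le_sum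
          intro j hj
          exact choose_mono_left (by simp at hj; omega) (by omega)
      _ = (2 * m + 2) * Nat.choose (32 * m - 1) (2 * m + 1) := by
          rw [Finset.sum_const, Finset.card_range, smul_eq_mul]
  omega

def eqLt (m : ℕ) : {p : Fin (32 * m) // (p : ℕ) < 16 * m} ≃ Fin (16 * m) where
  toFun x := ⟨x.1.1, x.2⟩
  invFun y := ⟨⟨y.1, by omega⟩, y.isLt⟩
  left_inv x := Subtype.ext (Fin.ext rfl)
  right_inv y := rfl

def eqGe (m : ℕ) : {p : Fin (32 * m) // ¬ (p : ℕ) < 16 * m} ≃ Fin (16 * m) where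
  toFun x := ⟨x.1.1 - 16 * m, by have h1 := x.1.isLt; have h2 := x.2; omega⟩
  invFun y := ⟨⟨16 * m + y.1, by have := y.isLt; omega⟩, by simp⟩
  left_inv x := Subtype.ext (Fin.ext (by have h2 := x.2; simp; omega))
  right_inv y := Fin.ext (by simp)

lemma count_fiber (m : ℕ) (w : Fin (32 * m) → Bool)
    [DecidablePred fun π : Equiv.Perm (Fin (32 * m)) => word m π = w] :
    (Finset.univ.filter (fun π : Equiv.Perm (Fin (32 * m)) => word m π = w)).card ≤
      Nat.factorial (16 * m) * Nat.factorial (16 * m) := by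
  set F := Finset.univ.filter (fun π : Equiv.Perm (Fin (32 * m)) => word m π = w) with hF
  rcases Finset.eq_empty_or_nonempty F with hFe | ⟨π₀, hπ₀⟩
  · rw [hFe]; simp
  have hw0 : word m π₀ = w := by
    rw [hF] at hπ₀; exact (Finset.mem_filter.mp hπ₀).2
  have hT : Fintype.card {v : Fin (32 * m) // w v = true} = 16 * m := by
    have e1 : {v : Fin (32 * m) // w v = true} ≃ {p : Fin (32 * m) // (p : ℕ) < 16 * m} :=
      Equiv.subtypeEquiv π₀.symm (fun v => by
        rw [← hw0]; simp [word])
    rw [Fintype.card_congr (e1.trans (eqLt m)), Fintype.card_fin]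
  have hTc : Fintype.card {v : Fin (32 * m) // w v = false} = 16 * m := by
    have e1 : {v : Fin (32 * m) // w v = false} ≃ {p : Fin (32 * m) // ¬ (p : ℕ) < 16 * m} :=
      Equiv.subtypeEquiv π₀.symm (fun v => by
        rw [← hw0]; simp [word])
    rw [Fintype.card_congr (e1.trans (eqGe m)), Fintype.card_fin]
  -- embeddings
  have hlt1 : ∀ i : Fin (16 * m), (i : ℕ) < 32 * m := fun i => by have := i.isLt; omega
  have hlt2 : ∀ i : Fin (16 * m), 16 * m + (i : ℕ) < 32 * m := fun i => by
    have := i.isLt; omega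
  let emb1 : ∀ π : Equiv.Perm (Fin (32 * m)), word m π = w →
      (Fin (16 * m) ↪ {v : Fin (32 * m) // w v = true}) := fun π hπ =>
    ⟨fun i => ⟨π ⟨(i : ℕ), hlt1 i⟩, by
        rw [← hπ]; simpa [word] using i.isLt⟩, by
      intro i j hij
      have h1 : π ⟨(i : ℕ), hlt1 i⟩ = π ⟨(j : ℕ), hlt1 j⟩ := congrArg Subtype.val hij
      have h2 := π.injective h1
      exact Fin.ext (by simpa [Fin.mk.injEq] using h2)⟩
  let emb2 : ∀ π : Equiv.Perm (Fin (32 * m)), word m π = w →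
      (Fin (16 * m) ↪ {v : Fin (32 * m) // w v = false}) := fun π hπ =>
    ⟨fun i => ⟨π ⟨16 * m + (i : ℕ), hlt2 i⟩, by
        rw [← hπ]; simp [word]⟩, by
      intro i j hij
      have h1 : π ⟨16 * m + (i : ℕ), hlt2 i⟩ = π ⟨16 * m + (j : ℕ), hlt2 j⟩ :=
        congrArg Subtype.val hij
      have h2 := π.injective h1
      exact Fin.ext (by simpa [Fin.mk.injEq] using h2)⟩
  classical
  let f : Equiv.Perm (Fin (32 * m)) →
      (Fin (16 * m) ↪ {v : Fin (32 * m) // w v = true}) ×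
      (Fin (16 * m) ↪ {v : Fin (32 * m) // w v = false}) := fun π =>
    if hπ : word m π = w then (emb1 π hπ, emb2 π hπ) else (emb1 π₀ hw0, emb2 π₀ hw0)
  have hinj : Set.InjOn f ↑F := by
    intro π hπ π' hπ' hff
    have hπw : word m π = w := by
      rw [hF] at hπ; exact (Finset.mem_filter.mp hπ).2
    have hπw' : word m π' = w := by
      rw [hF] at hπ'; exact (Finset.mem_filter.mp hπ').2
    simp only [f, dif_pos hπw, dif_pos hπw'] at hff
    have hf1 : emb1 π hπw = emb1 π' hπw' := congrArg Prod.fst hff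
    have hf2 : emb2 π hπw = emb2 π' hπw' := congrArg Prod.snd hff
    apply Equiv.ext
    intro p
    by_cases hp : (p : ℕ) < 16 * m
    · have h1 := congrArg Subtype.val (DFunLike.congr_fun hf1 ⟨(p : ℕ), hp⟩)
      simp only [emb1, Function.Embedding.coeFn_mk] at h1
      have hpe : p = (⟨((⟨(p : ℕ), hp⟩ : Fin (16 * m)) : ℕ), hlt1 _⟩ : Fin (32 * m)) :=
        Fin.ext rfl
      rw [hpe]
      exact h1
    · have hple := p.isLt
      have h1 := congrArg Subtype.val (DFunLike.congr_fun hf2 ⟨(p : ℕ) - 16 * m, by omega⟩)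
      simp only [emb2, Function.Embedding.coeFn_mk] at h1
      have hpe : p = (⟨16 * m + ((⟨(p : ℕ) - 16 * m, by omega⟩ : Fin (16 * m)) : ℕ),
          hlt2 _⟩ : Fin (32 * m)) := Fin.ext (by simp; omega)
      rw [hpe]
      exact h1
  have hcard : F.card ≤ Fintype.card
      ((Fin (16 * m) ↪ {v : Fin (32 * m) // w v = true}) ×
       (Fin (16 * m) ↪ {v : Fin (32 * m) // w v = false})) := by
    rw [← Finset.card_univ]
    exact Finset.card_le_card_of_injOn f (fun _ _ => Finset.mem_univ _) hinj
  rw [Fintype.card_prod, Fintype.card_embedding_eq, Fintype.card_embedding_eq,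
    hT, hTc, Fintype.card_fin, Nat.descFactorial_self] at hcard
  exact hcard

lemma key (m : ℕ) (hm : 1 ≤ m) :
    Set.ncard {π : Equiv.Perm (Fin (32 * m)) | ¬ IsType1Order π m} * 2 ^ m ≤
      Nat.factorial (32 * m) := by
  classical
  have hset : {π : Equiv.Perm (Fin (32 * m)) | ¬ IsType1Order π m} =
      ↑(Finset.univ.filter (fun π : Equiv.Perm (Fin (32 * m)) => ¬ IsType1Order π m)) := by
    ext π; simp
  rw [hset, Set.ncard_coe_finset]
  set P := Finset.univ.filter (fun π : Equiv.Perm (Fin (32 * m)) => ¬ IsType1Order π m)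
    with hP
  set BW := Finset.univ.filter (fun w : Fin (32 * m) → Bool => ¬ HasPat w m) with hBW
  have h1 : P.card ≤ (Nat.factorial (16 * m) * Nat.factorial (16 * m)) *
      (P.image (word m)).card := by
    apply Finset.card_le_mul_card_image
    intro b _
    calc (P.filter (fun π => word m π = b)).card
        ≤ (Finset.univ.filter (fun π : Equiv.Perm (Fin (32 * m)) => word m π = b)).card :=
          Finset.card_le_card (Finset.filter_subset_filter _ (Finset.subset_univ P))
      _ ≤ _ := count_fiber m b
  have h2 : P.image (word m) ⊆ BW := by
    intro b hb
    obtain ⟨π, hπ, rfl⟩ := Finset.mem_image.mp hb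
    have hπ' : ¬ IsType1Order π m := by
      rw [hP] at hπ; exact (Finset.mem_filter.mp hπ).2
    simp only [hBW, Finset.mem_filter, Finset.mem_univ, true_and]
    intro hpat
    exact hπ' (isType1Order_of_hasPat π hpat)
  have h3 : BW.card ≤ 2 * ((2 * m + 2) * Nat.choose (32 * m - 1) (2 * m + 1)) :=
    count_badwords m hm
  have h4 : Nat.choose (32 * m - 1) (2 * m + 1) ≤ Nat.choose (32 * m) (2 * m + 1) :=
    Nat.choose_le_choose _ (by omega)
  have h5 : 3 ^ (6 * m - 1) * Nat.choose (32 * m) (2 * m + 1) ≤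
      Nat.choose (32 * m) (8 * m) := by
    have h := choose_pow_three (N := 32 * m) (6 * m - 1) (2 * m + 1) (by omega)
    rwa [show 2 * m + 1 + (6 * m - 1) = 8 * m by omega] at h
  have h6 : Nat.choose (32 * m) (8 * m) ≤ Nat.choose (32 * m) (16 * m) :=
    choose_mono_left (by omega) (by omega)
  have h7 : Nat.choose (32 * m) (16 * m) * Nat.factorial (16 * m) *
      Nat.factorial (16 * m) = Nat.factorial (32 * m) := by
    have h := Nat.choose_mul_factorial_mul_factorial (show 16 * m ≤ 32 * m by omega)
    rwa [show 32 * m - 16 * m = 16 * m by omega] at h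
  have hnum : 2 * (2 * m + 2) * 2 ^ m ≤ 3 ^ (6 * m - 1) := numeric m hm
  calc P.card * 2 ^ m
      ≤ ((Nat.factorial (16 * m) * Nat.factorial (16 * m)) * BW.card) * 2 ^ m := by
        gcongr
        exact le_trans h1 (Nat.mul_le_mul_left _ (Finset.card_le_card h2))
    _ ≤ ((Nat.factorial (16 * m) * Nat.factorial (16 * m)) *
          (2 * ((2 * m + 2) * Nat.choose (32 * m) (2 * m + 1)))) * 2 ^ m := by
        gcongr
        exact le_trans h3 (by gcongr)
    _ = (Nat.factorial (16 * m) * Nat.factorial (16 * m)) *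
          ((2 * (2 * m + 2) * 2 ^ m) * Nat.choose (32 * m) (2 * m + 1)) := by ring
    _ ≤ (Nat.factorial (16 * m) * Nat.factorial (16 * m)) *
          (3 ^ (6 * m - 1) * Nat.choose (32 * m) (2 * m + 1)) := by gcongr
    _ ≤ (Nat.factorial (16 * m) * Nat.factorial (16 * m)) *
          Nat.choose (32 * m) (8 * m) := by gcongr
    _ ≤ (Nat.factorial (16 * m) * Nat.factorial (16 * m)) *
          Nat.choose (32 * m) (16 * m) := by gcongr
    _ = Nat.factorial (32 * m) := by rw [← h7]; ring

end Stmt11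

/-- Claim 4.2: for all large enough `n` divisible by `32`, the number of
permutations of `{1,…,n}` that are not type 1 orders with parameter `n/32` is
at most `2^{−n/32} · n!`; equivalently, a uniformly random permutation is a
type 1 order with parameter `n/32` with probability at least `1 − 2^{−n/32}`. -/
theorem stmt11 : ∃ N : ℕ, ∀ n : ℕ, N ≤ n → 32 ∣ n →
    Set.ncard {π : Equiv.Perm (Fin n) | ¬ IsType1Order π (n / 32)} * 2 ^ (n / 32) ≤
      Nat.factorial n := by
  refine ⟨0, fun n _ hdvd => ?_⟩
  obtain ⟨m, rfl⟩ := hdvd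
  have hq : 32 * m / 32 = m := by omega
  rw [hq]
  rcases Nat.eq_zero_or_pos m with rfl | hm
  · have : {π : Equiv.Perm (Fin (32 * 0)) | ¬ IsType1Order π 0} = ∅ := by
      ext π
      simp only [Set.mem_setOf_eq, Set.mem_empty_iff_false, iff_false, not_not]
      exact ⟨Fin.elim0, Fin.elim0, fun k => k.elim0, fun k => k.elim0,
        fun k => k.elim0, fun k => k.elim0⟩
    rw [this]
    simp
  · exact Stmt11.key m hm
end

section
/- Let s be a positive multiple of 4 and r ≥ 1, and let M be a 0/1 matrix with s rows and r columns in which every column contains exactly s/4 entries equal to 1. Then, with t = ⌊r·s / (8(r + s))⌋, there exist positions (i_1, j_1), (i_2, j_2), …, (i_t, j_t) with M_{i_k, j_k} = 1 for every k, and i_1 < i_2 < ⋯ < i_t and j_1 < j_2 < ⋯ < j_t. -/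
def chainLen {s r : ℕ} (M : Fin s → Fin r → Bool) (p : Fin s × Fin r) : ℕ :=
  1 + ((Finset.univ.filter fun q : Fin s × Fin r =>
      M q.1 q.2 = true ∧ q.1 < p.1 ∧ q.2 < p.2)).attach.sup
      (fun q => chainLen M q.1)
  termination_by p.1.1
  decreasing_by
    have := q.2
    simp only [Finset.mem_filter] at this
    exact this.2.2.1

theorem chainLen_lt {s r : ℕ} (M : Fin s → Fin r → Bool) {p q : Fin s × Fin r}
    (hp : M p.1 p.2 = true) (h1 : p.1 < q.1) (h2 : p.2 < q.2) :
    chainLen M p < chainLen M q := by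
  rw [chainLen.eq_def M q]
  have hmem : p ∈ (Finset.univ.filter fun x : Fin s × Fin r =>
      M x.1 x.2 = true ∧ x.1 < q.1 ∧ x.2 < q.2) := by
    simp [hp, h1, h2]
  have := Finset.le_sup (f := fun x : {x // x ∈ (Finset.univ.filter fun x : Fin s × Fin r =>
      M x.1 x.2 = true ∧ x.1 < q.1 ∧ x.2 < q.2)} => chainLen M x.1)
      (Finset.mem_attach _ ⟨p, hmem⟩)
  dsimp only at this
  omega

theorem exists_chain {s r : ℕ} (M : Fin s → Fin r → Bool) :
    ∀ n (p : Fin s × Fin r), p.1.1 < n → M p.1 p.2 = true →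
    ∃ l : List (Fin s × Fin r), l.length = chainLen M p ∧
      (∀ x ∈ l, M x.1 x.2 = true) ∧
      l.Pairwise (fun a b => a.1 < b.1 ∧ a.2 < b.2) ∧
      (∀ x ∈ l, x.1 ≤ p.1 ∧ x.2 ≤ p.2) := by
  intro n
  induction n with
  | zero => intro p h; omega
  | succ n ih =>
    intro p hpn hp
    rw [chainLen.eq_def M p]
    set S := (Finset.univ.filter fun x : Fin s × Fin r =>
        M x.1 x.2 = true ∧ x.1 < p.1 ∧ x.2 < p.2) with hS
    rcases S.eq_empty_or_nonempty with he | hne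
    · refine ⟨[p], ?_, ?_, ?_, ?_⟩
      · simp [he]
      · simp [hp]
      · simp
      · simp
    · obtain ⟨q, hqmem, hq⟩ := Finset.exists_mem_eq_sup S.attach
        (Finset.attach_nonempty_iff.mpr hne) (fun x => chainLen M x.1)
      obtain ⟨-, hMq, hq1, hq2⟩ := Finset.mem_filter.mp q.2
      obtain ⟨l, hl, hlone, hlpair, hlle⟩ := ih q.1 (by omega) hMq
      refine ⟨l ++ [p], ?_, ?_, ?_, ?_⟩
      · simp [hl, ← hq]; omega
      · intro x hx
        rcases List.mem_append.mp hx with h | h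
        · exact hlone x h
        · simp at h; subst h; exact hp
      · rw [List.pairwise_append]
        refine ⟨hlpair, by simp, ?_⟩
        intro a ha b hb
        simp at hb; subst hb
        have := hlle a ha
        exact ⟨lt_of_le_of_lt this.1 hq1, lt_of_le_of_lt this.2 hq2⟩
      · intro x hx
        rcases List.mem_append.mp hx with h | h
        · have := hlle x h
          exact ⟨le_of_lt (lt_of_le_of_lt this.1 hq1), le_of_lt (lt_of_le_of_lt this.2 hq2)⟩
        · simp at h; subst h; exact ⟨le_refl _, le_refl _⟩

/-- Lemma 5.1: if every column of an `s × r` Boolean matrix `M` contains exactly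
`s/4` ones (`4 ∣ s`), then with `t = ⌊r·s / (8(r+s))⌋` there are `t` positions
with value `1` that are strictly increasing in both coordinates. -/
theorem stmt12 (s r : ℕ) (hs : 0 < s) (h4 : 4 ∣ s) (hr : 1 ≤ r)
    (M : Fin s → Fin r → Bool)
    (hM : ∀ j : Fin r, (Finset.univ.filter fun i => M i j = true).card = s / 4) :
    ∃ pos : Fin (r * s / (8 * (r + s))) → Fin s × Fin r,
      (∀ k, M (pos k).1 (pos k).2 = true) ∧
      StrictMono (fun k => (pos k).1) ∧
      StrictMono (fun k => (pos k).2) := by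
  set t := r * s / (8 * (r + s)) with ht
  set ones : Finset (Fin s × Fin r) :=
    Finset.univ.filter (fun p => M p.1 p.2 = true) with hones
  have hs4 : 4 ≤ s := Nat.le_of_dvd hs h4
  have hchain1 : ∀ p : Fin s × Fin r, 1 ≤ chainLen M p := by
    intro p; rw [chainLen.eq_def]; omega
  -- ones is nonempty
  have hcol : (Finset.univ.filter fun i => M i ⟨0, hr⟩ = true).Nonempty := by
    rw [← Finset.card_pos, hM]
    have : 1 ≤ s / 4 := (Nat.one_le_div_iff (by norm_num)).mpr hs4
    omega
  obtain ⟨i0, hi0⟩ := hcol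
  have hone0 : ((i0, ⟨0, hr⟩) : Fin s × Fin r) ∈ ones := by
    simp only [hones, Finset.mem_filter, Finset.mem_univ, true_and]
    exact (Finset.mem_filter.mp hi0).2
  obtain ⟨p0, hp0mem, hp0max⟩ := Finset.exists_max_image ones (chainLen M) ⟨_, hone0⟩
  set L := chainLen M p0 with hL
  have hMp0 : M p0.1 p0.2 = true := by
    have := hp0mem; simp only [hones, Finset.mem_filter] at this; exact this.2
  -- card of ones
  have hcard : ones.card = r * (s / 4) := by
    have : ones.card = ∑ j : Fin r, (Finset.univ.filter fun i => M i j = true).card := by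
      rw [hones, Finset.card_filter, Fintype.sum_prod_type, Finset.sum_comm]
      exact Finset.sum_congr rfl fun j _ => (Finset.card_filter _ _).symm
    rw [this]
    simp [hM, Finset.sum_const, Finset.card_univ]
  -- antichain injectivity
  have hinj : ∀ p ∈ ones, ∀ q ∈ ones, chainLen M p = chainLen M q →
      p.1.1 + (r - 1 - p.2.1) = q.1.1 + (r - 1 - q.2.1) → p = q := by
    intro p hp q hq hcl hsum
    have hMp : M p.1 p.2 = true := by
      have := hp; simp only [hones, Finset.mem_filter] at this; exact this.2
    have hMq : M q.1 q.2 = true := by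
      have := hq; simp only [hones, Finset.mem_filter] at this; exact this.2
    have hp2 : p.2.1 < r := p.2.2
    have hq2 : q.2.1 < r := q.2.2
    rcases lt_trichotomy p.1.1 q.1.1 with h | h | h
    · have h2 : p.2.1 < q.2.1 := by omega
      have := chainLen_lt M hMp (by exact h) (by exact h2)
      omega
    · have h2 : p.2.1 = q.2.1 := by omega
      exact Prod.ext (Fin.ext h) (Fin.ext h2)
    · have h2 : q.2.1 < p.2.1 := by omega
      have := chainLen_lt M hMq (by exact h) (by exact h2)
      omega
  -- card bound
  have hbound : ones.card ≤ L * (r + s - 1) := by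
    have hmap : ∀ p ∈ ones, ((chainLen M p, p.1.1 + (r - 1 - p.2.1)) : ℕ × ℕ) ∈
        Finset.Icc 1 L ×ˢ Finset.range (r + s - 1) := by
      intro p hp
      rw [Finset.mem_product, Finset.mem_Icc, Finset.mem_range]
      refine ⟨⟨hchain1 p, hp0max p hp⟩, ?_⟩
      have h1 : p.1.1 < s := p.1.2
      have h2 : p.2.1 < r := p.2.2
      omega
    have := Finset.card_le_card_of_injOn
      (fun p : Fin s × Fin r => ((chainLen M p, p.1.1 + (r - 1 - p.2.1)) : ℕ × ℕ))
      hmap ?_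
    · simpa [Finset.card_product, Nat.card_Icc] using this
    · intro a ha b hb heq
      simp only [Prod.mk.injEq] at heq
      exact hinj a (Finset.mem_coe.mp ha) b (Finset.mem_coe.mp hb) heq.1 heq.2
  -- arithmetic: t ≤ L
  have h1 : r * (s / 4) ≤ L * (r + s) := by
    calc r * (s / 4) = ones.card := hcard.symm
      _ ≤ L * (r + s - 1) := hbound
      _ ≤ L * (r + s) := Nat.mul_le_mul_left L (by omega)
  have htL : t ≤ L := by
    have e1 : t = r * s / 8 / (r + s) := by rw [ht, Nat.div_div_eq_div_mul]
    have e2 : r * s / 8 ≤ r * s / 4 := Nat.div_le_div_left (by norm_num) (by norm_num)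
    have e3 : r * s / 4 = r * (s / 4) := Nat.mul_div_assoc r h4
    have e4 : r * (s / 4) / (r + s) ≤ L * (r + s) / (r + s) := Nat.div_le_div_right h1
    rw [Nat.mul_div_cancel _ (by omega : 0 < r + s)] at e4
    calc t = r * s / 8 / (r + s) := e1
      _ ≤ r * s / 4 / (r + s) := Nat.div_le_div_right e2
      _ = r * (s / 4) / (r + s) := by rw [e3]
      _ ≤ L := e4
  -- build the chain
  obtain ⟨l, hlen, hlone, hlpair, -⟩ := exists_chain M (p0.1.1 + 1) p0 (by omega) hMp0
  have hLlen : t ≤ l.length := by rw [hlen]; exact htL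
  have hget := List.pairwise_iff_get.mp hlpair
  refine ⟨fun k => l.get ⟨k.1, lt_of_lt_of_le k.2 hLlen⟩, ?_, ?_, ?_⟩
  · intro k; exact hlone _ (List.get_mem l _)
  · intro a b hab
    exact (hget ⟨a.1, lt_of_lt_of_le a.2 hLlen⟩ ⟨b.1, lt_of_lt_of_le b.2 hLlen⟩
      (Fin.mk_lt_mk.mpr (Fin.lt_def.mp hab))).1
  · intro a b hab
    exact (hget ⟨a.1, lt_of_lt_of_le a.2 hLlen⟩ ⟨b.1, lt_of_lt_of_le b.2 hLlen⟩
      (Fin.mk_lt_mk.mpr (Fin.lt_def.mp hab))).2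
end

section
/- Let M be a Boolean matrix with a ≥ 1 rows and b ≥ 1 columns. Then the maximum length of a strictly increasing subsequence of σ(M) all of whose terms are positive equals W(M). Consequently, W(M) ≤ lis(σ(M)) ≤ W(M) + 1. -/
/-- `lisPos x` is the maximum cardinality of an increasing subsequence of `x`
all of whose terms are positive. -/
def lisPos {N : ℕ} (x : Fin N → ℕ) : ℕ :=
  Finset.sup (Finset.univ.filter fun T : Finset (Fin N) =>
    (∀ i ∈ T, ∀ j ∈ T, i < j → x i < x j) ∧ ∀ i ∈ T, 0 < x i) Finset.card

/-- `sigmaM a b M` lists the entries of the `a × b` Boolean matrix `M` column by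
column (each column from top to bottom); the entry in (`0`-indexed) row `i` and
column `j` contributes `b·i + j + 1` if it is `1` (the paper's `b(i−1)+j` in
`1`-indexed terms) and `0` otherwise.  The entry at stream position `k` sits in
row `k % a` and column `k / a`. -/
def sigmaM (a b : ℕ) (M : Fin a → Fin b → Bool) : Fin (a * b) → ℕ :=
  fun k =>
    if h : (k : ℕ) % a < a ∧ (k : ℕ) / a < b then
      (if M ⟨(k : ℕ) % a, h.1⟩ ⟨(k : ℕ) / a, h.2⟩ then
        b * ((k : ℕ) % a) + (k : ℕ) / a + 1 else 0)
    else 0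

/-- `Wchain M` is the maximum cardinality of a monotone chain of ones in `M`:
a set of positions with entry `1` that is totally ordered in the componentwise
order (equivalently, the maximum number of ones covered by a single down/right
lattice path). -/
def Wchain {a b : ℕ} (M : Fin a → Fin b → Bool) : ℕ :=
  Finset.sup (Finset.univ.filter fun P : Finset (Fin a × Fin b) =>
    (∀ p ∈ P, M p.1 p.2 = true) ∧
    ∀ p ∈ P, ∀ q ∈ P, (p.1 ≤ q.1 ∧ p.2 ≤ q.2) ∨ (q.1 ≤ p.1 ∧ q.2 ≤ p.2))
    Finset.card

/-- Claim 5.2 (precise two-sided form): for an `a × b` Boolean matrix `M`, the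
maximum length of a strictly increasing subsequence of `σ(M)` with all terms
positive equals `W(M)`, and consequently `W(M) ≤ lis(σ(M)) ≤ W(M) + 1`. -/
theorem stmt13 (a b : ℕ) (ha : 1 ≤ a) (hb : 1 ≤ b) (M : Fin a → Fin b → Bool) :
    lisPos (sigmaM a b M) = Wchain M ∧
    Wchain M ≤ lis (sigmaM a b M) ∧ lis (sigmaM a b M) ≤ Wchain M + 1 := by
  have ha0 : 0 < a := ha
  set x := sigmaM a b M with hxdef
  -- the position maps
  have hmod : ∀ k : Fin (a*b), (k:ℕ) % a < a := fun k => Nat.mod_lt _ ha0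
  have hdiv : ∀ k : Fin (a*b), (k:ℕ) / a < b := fun k => by
    have := k.2; exact Nat.div_lt_of_lt_mul (by omega)
  set f : Fin (a*b) → Fin a × Fin b :=
    fun k => (⟨(k:ℕ) % a, hmod k⟩, ⟨(k:ℕ) / a, hdiv k⟩) with hfdef
  have hgb : ∀ p : Fin a × Fin b, a * (p.2:ℕ) + (p.1:ℕ) < a * b := by
    intro p
    have h1 : (p.1:ℕ) < a := p.1.2
    have h2 : (p.2:ℕ) < b := p.2.2
    have h3 : a * ((p.2:ℕ)+1) ≤ a * b := Nat.mul_le_mul_left a (by omega)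
    have h4 : a * ((p.2:ℕ)+1) = a * (p.2:ℕ) + a := by ring
    omega
  set g : Fin a × Fin b → Fin (a*b) := fun p => ⟨a * (p.2:ℕ) + (p.1:ℕ), hgb p⟩ with hgdef
  have hfg1 : ∀ p : Fin a × Fin b, ((g p : ℕ)) % a = (p.1:ℕ) := by
    intro p; simp [hgdef, Nat.mul_add_mod, Nat.mod_eq_of_lt p.1.2]
  have hfg2 : ∀ p : Fin a × Fin b, ((g p : ℕ)) / a = (p.2:ℕ) := by
    intro p
    simp only [hgdef]
    rw [Nat.mul_add_div ha0, Nat.div_eq_of_lt p.1.2]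
    omega
  have hfg : ∀ p, f (g p) = p := by
    intro p
    have h1 : (f (g p)).1 = p.1 := Fin.ext (hfg1 p)
    have h2 : (f (g p)).2 = p.2 := Fin.ext (hfg2 p)
    exact Prod.ext h1 h2
  have hval : ∀ k : Fin (a*b), x k = if M (f k).1 (f k).2 then b * ((k:ℕ) % a) + (k:ℕ) / a + 1 else 0 := by
    intro k
    simp only [hxdef, sigmaM, hfdef]
    rw [dif_pos ⟨hmod k, hdiv k⟩]
  have hpos_iff : ∀ k : Fin (a*b), 0 < x k ↔ M (f k).1 (f k).2 = true := by
    intro k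
    rw [hval k]
    by_cases h : M (f k).1 (f k).2 = true <;> simp [h]
  have hval' : ∀ k : Fin (a*b), M (f k).1 (f k).2 = true →
      x k = b * ((f k).1 : ℕ) + ((f k).2 : ℕ) + 1 := by
    intro k h; rw [hval k, if_pos h]
  -- injectivity of f
  have hfinj : Function.Injective f := by
    intro k k' h
    have h1 : (k:ℕ) % a = (k':ℕ) % a := congrArg (fun p => ((p.1 : Fin a) : ℕ)) h
    have h2 : (k:ℕ) / a = (k':ℕ) / a := congrArg (fun p => ((p.2 : Fin b) : ℕ)) h
    have e1 : a * ((k:ℕ)/a) + (k:ℕ) % a = (k:ℕ) := Nat.div_add_mod _ _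
    have e2 : a * ((k':ℕ)/a) + (k':ℕ) % a = (k':ℕ) := Nat.div_add_mod _ _
    rw [h1, h2] at e1
    exact Fin.ext (by omega)
  -- key comparison A: positions+values increasing gives chain order
  have hA : ∀ k k' : Fin (a*b), (k:ℕ) < (k':ℕ) → x k < x k' → 0 < x k → 0 < x k' →
      ((f k).1 ≤ (f k').1 ∧ (f k).2 ≤ (f k').2) := by
    intro k k' hkk hv h1 h2
    have m1 := hval' k ((hpos_iff k).1 h1)
    have m2 := hval' k' ((hpos_iff k').1 h2)
    set i := ((f k).1 : ℕ)
    set j := ((f k).2 : ℕ)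
    set i' := ((f k').1 : ℕ)
    set j' := ((f k').2 : ℕ)
    have hj : j ≤ j' := Nat.div_le_div_right (Nat.le_of_lt hkk)
    have hi : i ≤ i' := by
      by_contra hcon
      push_neg at hcon
      have hmul : b * (i' + 1) ≤ b * i := Nat.mul_le_mul_left b (by omega)
      have hms : b * (i' + 1) = b * i' + b := by ring
      have hjb : j' < b := (f k').2.2
      omega
    exact ⟨hi, hj⟩
  -- key comparison B: chain order gives positions+values increasing
  have hB : ∀ p q : Fin a × Fin b, p.1 ≤ q.1 → p.2 ≤ q.2 → p ≠ q →
      ((g p : ℕ) < (g q : ℕ) ∧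
       b * (p.1:ℕ) + (p.2:ℕ) + 1 < b * (q.1:ℕ) + (q.2:ℕ) + 1) := by
    intro p q h1 h2 hne
    have h1' : (p.1:ℕ) ≤ (q.1:ℕ) := h1
    have h2' : (p.2:ℕ) ≤ (q.2:ℕ) := h2
    have hne' : (p.1:ℕ) ≠ (q.1:ℕ) ∨ (p.2:ℕ) ≠ (q.2:ℕ) := by
      by_contra hc
      push_neg at hc
      exact hne (Prod.ext (Fin.ext hc.1) (Fin.ext hc.2))
    constructor
    · simp only [hgdef]
      rcases Nat.lt_or_ge (p.2:ℕ) (q.2:ℕ) with h | h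
      · have h3 : a * ((p.2:ℕ) + 1) ≤ a * (q.2:ℕ) := Nat.mul_le_mul_left a (by omega)
        have h4 : a * ((p.2:ℕ) + 1) = a * (p.2:ℕ) + a := by ring
        have h5 := p.1.2
        omega
      · have h3 : (p.2:ℕ) = (q.2:ℕ) := le_antisymm h2' h
        have h4 : a * (p.2:ℕ) = a * (q.2:ℕ) := by rw [h3]
        have h5 : (p.1:ℕ) < (q.1:ℕ) := by
          rcases hne' with h6 | h6
          · omega
          · exact absurd h3 h6
        omega
    · rcases Nat.lt_or_ge (p.1:ℕ) (q.1:ℕ) with h | h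
      · have h3 : b * ((p.1:ℕ) + 1) ≤ b * (q.1:ℕ) := Nat.mul_le_mul_left b (by omega)
        have h4 : b * ((p.1:ℕ) + 1) = b * (p.1:ℕ) + b := by ring
        have h5 := p.2.2
        omega
      · have h3 : (p.1:ℕ) = (q.1:ℕ) := le_antisymm h1' h
        have h4 : b * (p.1:ℕ) = b * (q.1:ℕ) := by rw [h3]
        have h5 : (p.2:ℕ) < (q.2:ℕ) := by
          rcases hne' with h6 | h6
          · exact absurd h3 h6
          · omega
        omega
  -- lisPos ≤ Wchain
  have H1 : lisPos x ≤ Wchain M := by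
    apply Finset.sup_le
    intro T hT
    rw [Finset.mem_filter] at hT
    obtain ⟨-, hinc, hpos⟩ := hT
    have hcard : T.card = (T.image f).card :=
      (Finset.card_image_of_injective T hfinj).symm
    rw [hcard]
    apply Finset.le_sup
    rw [Finset.mem_filter]
    refine ⟨Finset.mem_univ _, ?_, ?_⟩
    · intro p hp
      rw [Finset.mem_image] at hp
      obtain ⟨k, hk, rfl⟩ := hp
      exact (hpos_iff k).1 (hpos k hk)
    · intro p hp q hq
      rw [Finset.mem_image] at hp hq
      obtain ⟨k, hk, rfl⟩ := hp
      obtain ⟨k', hk', rfl⟩ := hq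
      rcases lt_trichotomy k k' with h | h | h
      · exact Or.inl (hA k k' h (hinc k hk k' hk' h) (hpos k hk) (hpos k' hk'))
      · subst h; exact Or.inl ⟨le_refl _, le_refl _⟩
      · exact Or.inr (hA k' k h (hinc k' hk' k hk h) (hpos k' hk') (hpos k hk))
  -- Wchain ≤ lisPos
  have H2 : Wchain M ≤ lisPos x := by
    apply Finset.sup_le
    intro P hP
    rw [Finset.mem_filter] at hP
    obtain ⟨-, hone, hchain⟩ := hP
    have hginj : Function.Injective g := by
      intro p q h
      have : f (g p) = f (g q) := congrArg f h
      rwa [hfg, hfg] at this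
    have hcard : P.card = (P.image g).card :=
      (Finset.card_image_of_injective P hginj).symm
    rw [hcard]
    apply Finset.le_sup
    rw [Finset.mem_filter]
    have hxg : ∀ p ∈ P, x (g p) = b * (p.1:ℕ) + (p.2:ℕ) + 1 := by
      intro p hp
      have := hval' (g p) (by rw [hfg]; exact hone p hp)
      rw [hfg] at this
      exact this
    refine ⟨Finset.mem_univ _, ?_, ?_⟩
    · intro k hk k' hk' hlt
      rw [Finset.mem_image] at hk hk'
      obtain ⟨p, hp, rfl⟩ := hk
      obtain ⟨q, hq, rfl⟩ := hk'
      have hne : p ≠ q := by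
        intro h; subst h; exact absurd hlt (lt_irrefl _)
      rcases hchain p hp q hq with ⟨h1, h2⟩ | ⟨h1, h2⟩
      · rw [hxg p hp, hxg q hq]
        exact (hB p q h1 h2 hne).2
      · exfalso
        have := (hB q p h1 h2 (Ne.symm hne)).1
        have hlt' : ((g p : Fin (a*b)) : ℕ) < ((g q : Fin (a*b)) : ℕ) := hlt
        omega
    · intro k hk
      rw [Finset.mem_image] at hk
      obtain ⟨p, hp, rfl⟩ := hk
      rw [hxg p hp]
      omega
  -- lisPos ≤ lis
  have H3 : lisPos x ≤ lis x := by
    apply Finset.sup_le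
    intro T hT
    rw [Finset.mem_filter] at hT
    exact Finset.le_sup (Finset.mem_filter.2 ⟨Finset.mem_univ _, hT.2.1⟩)
  -- lis ≤ lisPos + 1
  have H4 : lis x ≤ lisPos x + 1 := by
    apply Finset.sup_le
    intro T hT
    rw [Finset.mem_filter] at hT
    obtain ⟨-, hinc⟩ := hT
    set T' := T.filter (fun i => 0 < x i) with hT'def
    have hle : T'.card ≤ lisPos x := by
      apply Finset.le_sup
      rw [Finset.mem_filter]
      refine ⟨Finset.mem_univ _, ?_, ?_⟩
      · intro i hi j hj hij
        exact hinc i (Finset.mem_of_mem_filter i hi) j (Finset.mem_of_mem_filter j hj) hij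
      · intro i hi
        exact (Finset.mem_filter.1 hi).2
    have hsplit : T'.card +
        (T.filter (fun i => ¬ 0 < x i)).card = T.card :=
      Finset.card_filter_add_card_filter_not (p := fun i => 0 < x i)
    have hone : (T.filter (fun i => ¬ 0 < x i)).card ≤ 1 := by
      rw [Finset.card_le_one]
      intro i hi j hj
      rw [Finset.mem_filter] at hi hj
      rcases lt_trichotomy i j with h | h | h
      · exfalso
        have := hinc i hi.1 j hj.1 h
        omega
      · exact h
      · exfalso
        have := hinc j hj.1 i hi.1 h
        omega
    omega
  have heq : lisPos x = Wchain M := le_antisymm H1 H2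
  exact ⟨heq, heq ▸ H3, by omega⟩
end

section
/- Let p, q ≥ 1 and let u, v ∈ ({0,1}^p)^q with u = v. Then W(M(u,v)) ≤ 4p + 6q + min(p, q). -/
/-- The length-9 patterns `e(1) = (1,1,0,0,0,0,1,1,0)` and
`e(0) = (0,0,1,1,1,1,0,0,0)` (rows `0`-indexed). -/
def epat (x : Bool) (r : Fin 9) : Bool :=
  if x then decide ((r : ℕ) = 0 ∨ (r : ℕ) = 1 ∨ (r : ℕ) = 6 ∨ (r : ℕ) = 7)
  else decide (2 ≤ (r : ℕ) ∧ (r : ℕ) ≤ 5)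

/-- `ebar p w` is the concatenation `e(w_1) e(w_2) ⋯ e(w_p) ∈ {0,1}^{9p}`. -/
def ebar (p : ℕ) (w : Fin p → Bool) : Fin (9 * p) → Bool :=
  fun r => epat (w ⟨(r : ℕ) / 9, by have := r.isLt; omega⟩) ⟨(r : ℕ) % 9, by omega⟩

/-- The `9p × 8q` Boolean matrix `M(u,v)`: for `1 ≤ i ≤ q` (so `0`-indexed block
`i−1 = c/8`), column `8i−4` (`0`-indexed `c` with `c % 8 = 3`) is `ē(u^{(i)})`,
column `8i−3` (`0`-indexed `c % 8 = 4`) is `ē(v^{(i)})`, and every other column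
has a `1` exactly in the rows whose `1`-indexed number is a multiple of `9`. -/
def Mmat (p q : ℕ) (u v : Fin q → Fin p → Bool) : Fin (9 * p) → Fin (8 * q) → Bool :=
  fun r c =>
    if (c : ℕ) % 8 = 3 then ebar p (u ⟨(c : ℕ) / 8, by have := c.isLt; omega⟩) r
    else if (c : ℕ) % 8 = 4 then ebar p (v ⟨(c : ℕ) / 8, by have := c.isLt; omega⟩) r
    else decide ((r : ℕ) % 9 = 8)

/-- Row weights for the first potential (`G = 5`). -/
def gam1 : ℕ → ℕ
  | 0 => 0 | 1 => 1 | 2 => 0 | 3 => 1 | 4 => 2 | 5 => 3 | 6 => 2 | 7 => 3 | _ => 4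

/-- Column weights for the first potential (`H = 6`). -/
def eta1 : ℕ → ℕ
  | 0 => 0 | 1 => 1 | 2 => 2 | 3 => 2 | 4 => 3 | 5 => 3 | 6 => 4 | _ => 5

/-- Row weights for the second potential (`G = 4`). -/
def gam2 : ℕ → ℕ
  | 0 => 0 | 1 => 1 | 2 => 0 | 3 => 1 | 4 => 2 | 5 => 3 | 6 => 2 | 7 => 3 | _ => 3

/-- Column weights for the second potential (`H = 7`). -/
def eta2 : ℕ → ℕ
  | 0 => 0 | 1 => 1 | 2 => 2 | 3 => 2 | 4 => 3 | 5 => 4 | 6 => 5 | _ => 6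

/-- `ℕ`-level version of `epat`. -/
def epatN (x : Bool) (ρ : ℕ) : Prop :=
  if x then ρ = 0 ∨ ρ = 1 ∨ ρ = 6 ∨ ρ = 7 else 2 ≤ ρ ∧ ρ ≤ 5

instance (x : Bool) (ρ : ℕ) : Decidable (epatN x ρ) := by
  unfold epatN; infer_instance

lemma epatN_of_epat (x : Bool) (ρ : ℕ) (h : ρ < 9)
    (he : epat x ⟨ρ, h⟩ = true) : epatN x ρ := by
  cases x <;> simp [epat] at he <;> simp [epatN] <;> omega

/-- The local condition guaranteeing that the potential
`G*(r/9) + gam (r%9) + H*(c/8) + eta (c%8)` strictly increases along any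
comparable pair of ones of `Mmat p q u u`. -/
def Core (G H : ℕ) (gam eta : ℕ → ℕ) : Prop :=
  ∀ ρ1 < 9, ∀ ρ2 < 9, ∀ κ1 < 8, ∀ κ2 < 8, ∀ (x1 x2 bb jj : Bool),
    ((κ1 = 3 ∨ κ1 = 4) → epatN x1 ρ1) →
    (¬(κ1 = 3 ∨ κ1 = 4) → ρ1 = 8) →
    ((κ2 = 3 ∨ κ2 = 4) → epatN x2 ρ2) →
    (¬(κ2 = 3 ∨ κ2 = 4) → ρ2 = 8) →
    (bb = false → ρ1 ≤ ρ2) →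
    (jj = false → κ1 ≤ κ2) →
    (bb = false → jj = false → x1 = x2) →
    (bb = false → jj = false → ¬(ρ1 = ρ2 ∧ κ1 = κ2)) →
    gam ρ1 + eta κ1 < (cond bb G 0) + gam ρ2 + (cond jj H 0) + eta κ2

set_option synthInstance.maxSize 100000 in
set_option synthInstance.maxHeartbeats 4000000 in
set_option maxHeartbeats 4000000 in
lemma core1 : Core 5 6 gam1 eta1 := by unfold Core; decide

set_option synthInstance.maxSize 100000 in
set_option synthInstance.maxHeartbeats 4000000 in
set_option maxHeartbeats 4000000 in
lemma core2 : Core 4 7 gam2 eta2 := by unfold Core; decide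

/-- Generic bound: a valid potential bounds the chain number. -/
lemma wchain_le_of_core (p q : ℕ) (hp : 1 ≤ p) (hq : 1 ≤ q)
    (u : Fin q → Fin p → Bool) (G H : ℕ) (gam eta : ℕ → ℕ)
    (hcore : Core G H gam eta) (N : ℕ)
    (hN : ∀ ρ < 9, ∀ κ < 8, G * (p - 1) + gam ρ + H * (q - 1) + eta κ < N) :
    Wchain (Mmat p q u u) ≤ N := by
  unfold Wchain
  apply Finset.sup_le
  intro P hP
  rw [Finset.mem_filter] at hP
  obtain ⟨-, hones, hchain⟩ := hP
  set F : Fin (9 * p) × Fin (8 * q) → ℕ := fun z =>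
    G * ((z.1 : ℕ) / 9) + gam ((z.1 : ℕ) % 9) + H * ((z.2 : ℕ) / 8) + eta ((z.2 : ℕ) % 8)
    with hFdef
  -- extract the shape of the ones
  have hone : ∀ z ∈ P,
      ((((z.2 : ℕ) % 8 = 3 ∨ (z.2 : ℕ) % 8 = 4) →
        epat (u ⟨(z.2 : ℕ) / 8, by have := z.2.isLt; omega⟩
                ⟨(z.1 : ℕ) / 9, by have := z.1.isLt; omega⟩)
             ⟨(z.1 : ℕ) % 9, by omega⟩ = true) ∧
       (¬((z.2 : ℕ) % 8 = 3 ∨ (z.2 : ℕ) % 8 = 4) → (z.1 : ℕ) % 9 = 8)) := by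
    intro z hz
    have h1 := hones z hz
    simp only [Mmat, ebar] at h1
    constructor
    · intro h34
      rcases h34 with h3 | h4
      · rw [if_pos h3] at h1; exact h1
      · rw [if_neg (by omega), if_pos h4] at h1; exact h1
    · intro h34
      rw [if_neg (by omega), if_neg (by omega)] at h1
      exact of_decide_eq_true h1
  -- the potential strictly increases along the chain
  have hstep : ∀ z ∈ P, ∀ w ∈ P, z ≠ w → z.1 ≤ w.1 → z.2 ≤ w.2 → F z < F w := by
    intro z hz w hw hne hr hc
    obtain ⟨h1p, h1m⟩ := hone z hz
    obtain ⟨h2p, h2m⟩ := hone w hw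
    have hrv : (z.1 : ℕ) ≤ (w.1 : ℕ) := hr
    have hcv : (z.2 : ℕ) ≤ (w.2 : ℕ) := hc
    have hble : (z.1 : ℕ) / 9 ≤ (w.1 : ℕ) / 9 := by omega
    have hjle : (z.2 : ℕ) / 8 ≤ (w.2 : ℕ) / 8 := by omega
    rcases eq_or_lt_of_le hble with hb | hb
    · rcases eq_or_lt_of_le hjle with hj | hj
      · -- same row block, same column block
        have hx : (u ⟨(z.2 : ℕ) / 8, by have := z.2.isLt; omega⟩
                    ⟨(z.1 : ℕ) / 9, by have := z.1.isLt; omega⟩)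
                = (u ⟨(w.2 : ℕ) / 8, by have := w.2.isLt; omega⟩
                    ⟨(w.1 : ℕ) / 9, by have := w.1.isLt; omega⟩) := by
          have e1 : (⟨(z.2 : ℕ) / 8, by have := z.2.isLt; omega⟩ : Fin q)
              = ⟨(w.2 : ℕ) / 8, by have := w.2.isLt; omega⟩ := Fin.mk_eq_mk.mpr hj
          have e2 : (⟨(z.1 : ℕ) / 9, by have := z.1.isLt; omega⟩ : Fin p)
              = ⟨(w.1 : ℕ) / 9, by have := w.1.isLt; omega⟩ := Fin.mk_eq_mk.mpr hb
          rw [e1, e2]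
        have key := hcore ((z.1 : ℕ) % 9) (by omega) ((w.1 : ℕ) % 9) (by omega)
          ((z.2 : ℕ) % 8) (by omega) ((w.2 : ℕ) % 8) (by omega) _ _ false false
          (fun h => epatN_of_epat _ _ _ (h1p h)) h1m
          (fun h => epatN_of_epat _ _ _ (h2p h)) h2m (fun _ => by omega) (fun _ => by omega)
          (fun _ _ => hx)
          (fun _ _ hcon => hne (by
            obtain ⟨e1, e2⟩ := hcon
            have : (z.1 : ℕ) = (w.1 : ℕ) := by omega
            have h2 : (z.2 : ℕ) = (w.2 : ℕ) := by omega
            exact Prod.ext (Fin.ext this) (Fin.ext h2)))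
        simp only [Bool.cond_false, Bool.cond_true] at key
        have e1 : G * ((z.1 : ℕ) / 9) = G * ((w.1 : ℕ) / 9) := by rw [hb]
        have e2 : H * ((z.2 : ℕ) / 8) = H * ((w.2 : ℕ) / 8) := by rw [hj]
        simp only [hFdef]
        linarith
      · -- same row block, later column block
        have key := hcore ((z.1 : ℕ) % 9) (by omega) ((w.1 : ℕ) % 9) (by omega)
          ((z.2 : ℕ) % 8) (by omega) ((w.2 : ℕ) % 8) (by omega) _ _ false true
          (fun h => epatN_of_epat _ _ _ (h1p h)) h1m
          (fun h => epatN_of_epat _ _ _ (h2p h)) h2m (fun _ => by omega) (fun h => by simp at h)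
          (fun _ h => by simp at h) (fun _ h => by simp at h)
        simp only [Bool.cond_false, Bool.cond_true] at key
        have e1 : G * ((z.1 : ℕ) / 9) = G * ((w.1 : ℕ) / 9) := by rw [hb]
        have e2 : H * ((z.2 : ℕ) / 8 + 1) ≤ H * ((w.2 : ℕ) / 8) :=
          mul_le_mul_right (by omega) H
        rw [Nat.mul_add, Nat.mul_one] at e2
        simp only [hFdef]
        linarith
    · rcases eq_or_lt_of_le hjle with hj | hj
      · -- later row block, same column block
        have key := hcore ((z.1 : ℕ) % 9) (by omega) ((w.1 : ℕ) % 9) (by omega)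
          ((z.2 : ℕ) % 8) (by omega) ((w.2 : ℕ) % 8) (by omega) _ _ true false
          (fun h => epatN_of_epat _ _ _ (h1p h)) h1m
          (fun h => epatN_of_epat _ _ _ (h2p h)) h2m (fun h => by simp at h) (fun _ => by omega)
          (fun h => by simp at h) (fun h => by simp at h)
        simp only [Bool.cond_false, Bool.cond_true] at key
        have e1 : G * ((z.1 : ℕ) / 9 + 1) ≤ G * ((w.1 : ℕ) / 9) :=
          mul_le_mul_right (by omega) G
        rw [Nat.mul_add, Nat.mul_one] at e1
        have e2 : H * ((z.2 : ℕ) / 8) = H * ((w.2 : ℕ) / 8) := by rw [hj]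
        simp only [hFdef]
        linarith
      · -- later row block, later column block
        have key := hcore ((z.1 : ℕ) % 9) (by omega) ((w.1 : ℕ) % 9) (by omega)
          ((z.2 : ℕ) % 8) (by omega) ((w.2 : ℕ) % 8) (by omega) _ _ true true
          (fun h => epatN_of_epat _ _ _ (h1p h)) h1m
          (fun h => epatN_of_epat _ _ _ (h2p h)) h2m (fun h => by simp at h) (fun h => by simp at h)
          (fun h => by simp at h) (fun h => by simp at h)
        simp only [Bool.cond_false, Bool.cond_true] at key
        have e1 : G * ((z.1 : ℕ) / 9 + 1) ≤ G * ((w.1 : ℕ) / 9) :=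
          mul_le_mul_right (by omega) G
        rw [Nat.mul_add, Nat.mul_one] at e1
        have e2 : H * ((z.2 : ℕ) / 8 + 1) ≤ H * ((w.2 : ℕ) / 8) :=
          mul_le_mul_right (by omega) H
        rw [Nat.mul_add, Nat.mul_one] at e2
        simp only [hFdef]
        linarith
  -- injectivity of F on P and counting
  calc P.card ≤ (Finset.range N).card := by
        apply Finset.card_le_card_of_injOn F
        · intro z hz
          rw [Finset.mem_coe, Finset.mem_range]
          have h1 : (z.1 : ℕ) / 9 ≤ p - 1 := by have := z.1.isLt; omega
          have h2 : (z.2 : ℕ) / 8 ≤ q - 1 := by have := z.2.isLt; omega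
          have h3 := hN ((z.1 : ℕ) % 9) (by omega) ((z.2 : ℕ) % 8) (by omega)
          have m1 : G * ((z.1 : ℕ) / 9) ≤ G * (p - 1) := mul_le_mul_right h1 G
          have m2 : H * ((z.2 : ℕ) / 8) ≤ H * (q - 1) := mul_le_mul_right h2 H
          simp only [hFdef]
          linarith
        · intro z hz w hw hFeq
          simp only [Finset.mem_coe] at hz hw
          by_contra hne
          rcases hchain z hz w hw with ⟨h1, h2⟩ | ⟨h1, h2⟩
          · exact absurd hFeq (Nat.ne_of_lt (hstep z hz w hw hne h1 h2))
          · exact absurd hFeq.symm (Nat.ne_of_lt (hstep w hw z hz (Ne.symm hne) h1 h2))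
    _ = N := Finset.card_range N

/-- Claim 5.3: if `u = v` then `W(M(u,v)) ≤ 4p + 6q + min(p,q)`. -/
theorem stmt14 (p q : ℕ) (hp : 1 ≤ p) (hq : 1 ≤ q)
    (u v : Fin q → Fin p → Bool) (huv : u = v) :
    Wchain (Mmat p q u v) ≤ 4 * p + 6 * q + min p q := by
  subst huv
  have hg1 : ∀ n < 9, gam1 n ≤ 4 := by decide
  have he1 : ∀ n < 8, eta1 n ≤ 5 := by decide
  have hg2 : ∀ n < 9, gam2 n ≤ 3 := by decide
  have he2 : ∀ n < 8, eta2 n ≤ 6 := by decide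
  have B1 : Wchain (Mmat p q u u) ≤ 5 * p + 6 * q - 1 := by
    apply wchain_le_of_core p q hp hq u 5 6 gam1 eta1 core1
    intro ρ hρ κ hκ
    have := hg1 ρ hρ
    have := he1 κ hκ
    omega
  have B2 : Wchain (Mmat p q u u) ≤ 4 * p + 7 * q - 1 := by
    apply wchain_le_of_core p q hp hq u 4 7 gam2 eta2 core2
    intro ρ hρ κ hκ
    have := hg2 ρ hρ
    have := he2 κ hκ
    omega
  omega
end
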